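/- arXiv:2409.14528 — 2 statements merged into one kernel-verified Lean document; each statement's English description precedes it below -/
import Mathlib

section
/- Let G be an MP-tree and let M_G be its multipath matroid. Then for every integer k ≥ 0, k · T_{M_G}(1-k, 0) = (-1)^{r(G)} · τ_G(k), where r(G) is the rank of E(G) in M_G and τ_G(k) is the number of flowing k-colourings of G. -/
set_option autoImplicit false

noncomputable section

attribute [local instance] Classical.propDecidable

/-- A (finite) directed multigraph: finitely many vertices and edges, each edge
has a source and a target.  (Loops and, a priori, parallel edges are allowed;
the paper's convention of at most one edge between an ordered pair of distinct
vertices is imposed via `DiGraph.EdgeUnique`.) -/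
structure DiGraph where
  V : Type
  E : Type
  [fintV : Fintype V]
  [decV : DecidableEq V]
  [fintE : Fintype E]
  [decE : DecidableEq E]
  s : E → V
  t : E → V

attribute [instance] DiGraph.fintV DiGraph.decV DiGraph.fintE DiGraph.decE

namespace DiGraph

/-- For each ordered pair of *distinct* vertices there is at most one edge. -/
def EdgeUnique (G : DiGraph) : Prop :=
  ∀ e f : G.E, G.s e = G.s f → G.t e = G.t f → G.s e ≠ G.t e → e = f

/-- G has no loops. -/
def Loopless (G : DiGraph) : Prop := ∀ e : G.E, G.s e ≠ G.t e

/-- A coherently oriented cycle, given as the (cyclically ordered) list of its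
edges: the list is nonempty, has no repeated edges, visits no vertex twice,
and the target of each edge is the source of the next one (cyclically).
A loop is a coherently oriented cycle of length 1. -/
def IsCohCycle (G : DiGraph) (c : List G.E) : Prop :=
  c ≠ [] ∧ c.Nodup ∧ (c.map G.s).Nodup ∧
    ∀ i : Fin c.length,
      G.t (c.get i) =
        G.s (c.get ⟨(i.val + 1) % c.length,
          Nat.mod_lt _ (Nat.lt_of_le_of_lt (Nat.zero_le _) i.isLt)⟩)

/-- `m` is (the edge set of) a multipath of `G`: the corresponding spanning
subgraph has no loops, in-degree and out-degree at most one at each vertex, and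
contains no coherently oriented cycle; equivalently, every connected component
is a single vertex or a simple (directed) path. -/
def IsMultipath (G : DiGraph) (m : Finset G.E) : Prop :=
  (∀ e ∈ m, G.s e ≠ G.t e) ∧
  (∀ e ∈ m, ∀ f ∈ m, G.s e = G.s f → e = f) ∧
  (∀ e ∈ m, ∀ f ∈ m, G.t e = G.t f → e = f) ∧
  ¬∃ c : List G.E, IsCohCycle G c ∧ ∀ g ∈ c, g ∈ m

/-- The forbidden pattern (A): vertices v0,v1,v2 and edges (v1,v0), (v0,v2), (v1,v2). -/
def HasPatternA (G : DiGraph) : Prop :=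
  ∃ v0 v1 v2 : G.V, v0 ≠ v1 ∧ v0 ≠ v2 ∧ v1 ≠ v2 ∧
    (∃ e : G.E, G.s e = v1 ∧ G.t e = v0) ∧
    (∃ e : G.E, G.s e = v0 ∧ G.t e = v2) ∧
    (∃ e : G.E, G.s e = v1 ∧ G.t e = v2)

/-- The reverse of pattern (A). -/
def HasPatternArev (G : DiGraph) : Prop :=
  ∃ v0 v1 v2 : G.V, v0 ≠ v1 ∧ v0 ≠ v2 ∧ v1 ≠ v2 ∧
    (∃ e : G.E, G.s e = v0 ∧ G.t e = v1) ∧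
    (∃ e : G.E, G.s e = v2 ∧ G.t e = v0) ∧
    (∃ e : G.E, G.s e = v2 ∧ G.t e = v1)

/-- The forbidden pattern (B): vertices v0,v1,v2,v3 and edges (v0,v1), (v2,v1), (v2,v3). -/
def HasPatternB (G : DiGraph) : Prop :=
  ∃ v0 v1 v2 v3 : G.V,
    v0 ≠ v1 ∧ v0 ≠ v2 ∧ v0 ≠ v3 ∧ v1 ≠ v2 ∧ v1 ≠ v3 ∧ v2 ≠ v3 ∧
    (∃ e : G.E, G.s e = v0 ∧ G.t e = v1) ∧
    (∃ e : G.E, G.s e = v2 ∧ G.t e = v1) ∧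
    (∃ e : G.E, G.s e = v2 ∧ G.t e = v3)

/-- The reverse of pattern (B). -/
def HasPatternBrev (G : DiGraph) : Prop :=
  ∃ v0 v1 v2 v3 : G.V,
    v0 ≠ v1 ∧ v0 ≠ v2 ∧ v0 ≠ v3 ∧ v1 ≠ v2 ∧ v1 ≠ v3 ∧ v2 ≠ v3 ∧
    (∃ e : G.E, G.s e = v1 ∧ G.t e = v0) ∧
    (∃ e : G.E, G.s e = v1 ∧ G.t e = v2) ∧
    (∃ e : G.E, G.s e = v3 ∧ G.t e = v2)

/-- (MP1): G contains no copy, up to reversing all orientations, of the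
patterns (A) and (B). -/
def MP1 (G : DiGraph) : Prop :=
  ¬HasPatternA G ∧ ¬HasPatternArev G ∧ ¬HasPatternB G ∧ ¬HasPatternBrev G

/-- (MP2): every coherently oriented cycle of length ≥ 2 (i.e. loops excluded)
is a connected component: any edge incident to a vertex of the cycle belongs
to the cycle. -/
def MP2 (G : DiGraph) : Prop :=
  ∀ c : List G.E, IsCohCycle G c → 2 ≤ c.length →
    ∀ f : G.E, (∃ g ∈ c, G.s g = G.s f ∨ G.s g = G.t f) → f ∈ c

def IsMPDigraph (G : DiGraph) : Prop := MP1 G ∧ MP2 G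

/-- The axioms (I1), (I2), (I3) for a family of independent sets of a matroid. -/
def IsIndepFamily {α : Type} [DecidableEq α] (I : Finset α → Prop) : Prop :=
  I ∅ ∧ (∀ A B : Finset α, I A → B ⊆ A → I B) ∧
    ∀ A B : Finset α, I A → I B → B.card < A.card →
      ∃ x ∈ A, x ∉ B ∧ I (insert x B)

/-- `m` is the edge set of a linear sink (two non-loop edges with a common
target and distinct sources). -/
def IsLinearSinkSet (G : DiGraph) (m : Finset G.E) : Prop :=
  ∃ e1 e2 : G.E, e1 ≠ e2 ∧ m = {e1, e2} ∧ G.t e1 = G.t e2 ∧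
    G.s e1 ≠ G.s e2 ∧ G.s e1 ≠ G.t e1 ∧ G.s e2 ≠ G.t e2

/-- `m` is the edge set of a linear source (two non-loop edges with a common
source and distinct targets). -/
def IsLinearSourceSet (G : DiGraph) (m : Finset G.E) : Prop :=
  ∃ e1 e2 : G.E, e1 ≠ e2 ∧ m = {e1, e2} ∧ G.s e1 = G.s e2 ∧
    G.t e1 ≠ G.t e2 ∧ G.s e1 ≠ G.t e1 ∧ G.s e2 ≠ G.t e2

/-- `m` is the edge set of a coherently oriented cycle (possibly a loop). -/
def IsCohCycleSet (G : DiGraph) (m : Finset G.E) : Prop :=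
  ∃ c : List G.E, IsCohCycle G c ∧ m = c.toFinset

/-- Two vertices are adjacent if they are the endpoints of a common edge. -/
def adj (G : DiGraph) (v w : G.V) : Prop :=
  ∃ e : G.E, (G.s e = v ∧ G.t e = w) ∨ (G.s e = w ∧ G.t e = v)

/-- Two vertices lie in the same connected component. -/
def connRel (G : DiGraph) : G.V → G.V → Prop := Relation.EqvGen (adj G)

/-- G is connected. -/
def ConnectedD (G : DiGraph) : Prop := Nonempty G.V ∧ ∀ v w : G.V, connRel G v w

/-- The number of connected components of G (isolated vertices count). -/
def numComponents (G : DiGraph) : ℕ :=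
  Nat.card (Quotient (Relation.EqvGen.setoid (adj G)))

/-- `S` is the set of edges of one of the connected components of `G`. -/
def IsComponentEdges (G : DiGraph) (S : Finset G.E) : Prop :=
  ∃ v : G.V, S = Finset.univ.filter (fun e => connRel G v (G.s e))

/-- in-degree of `v` in the subgraph spanned by the edges of `R`. -/
def indegIn (G : DiGraph) (R : Finset G.E) (v : G.V) : ℕ :=
  (R.filter (fun e => G.t e = v)).card

/-- out-degree of `v` in the subgraph spanned by the edges of `R`. -/
def outdegIn (G : DiGraph) (R : Finset G.E) (v : G.V) : ℕ :=
  (R.filter (fun e => G.s e = v)).card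

def indeg (G : DiGraph) (v : G.V) : ℕ := indegIn G Finset.univ v
def outdeg (G : DiGraph) (v : G.V) : ℕ := outdegIn G Finset.univ v

/-- `v` is a vertex of the subgraph spanned by the edge set `R`. -/
def IncidentTo (G : DiGraph) (R : Finset G.E) (v : G.V) : Prop :=
  ∃ e ∈ R, G.s e = v ∨ G.t e = v

/-- `v` is stable in the subgraph spanned by `R`. -/
def StableIn (G : DiGraph) (R : Finset G.E) (v : G.V) : Prop :=
  indegIn G R v = 0 ∨ outdegIn G R v = 0

/-- `v` is unstable in `G`. -/
def UnstableG (G : DiGraph) (v : G.V) : Prop :=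
  0 < indeg G v ∧ 0 < outdeg G v

/-- adjacency within the subgraph spanned by `R`. -/
def adjIn (G : DiGraph) (R : Finset G.E) (a b : G.V) : Prop :=
  ∃ g ∈ R, (G.s g = a ∧ G.t g = b) ∨ (G.s g = b ∧ G.t g = a)

/-- The subgraph spanned by the edge set `R` is connected. -/
def EdgeConnected (G : DiGraph) (R : Finset G.E) : Prop :=
  ∀ e ∈ R, ∀ f ∈ R, Relation.EqvGen (adjIn G R) (G.s e) (G.s f)

/-- `R` spans a dynamical region of `G`: it is connected, has at least one
edge, every boundary vertex is unstable in `G` but stable in `R` and in its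
complement, and no edge of `R` lies on an oriented cycle of `G` not contained
in `R`. -/
def IsDynRegion (G : DiGraph) (R : Finset G.E) : Prop :=
  R.Nonempty ∧ EdgeConnected G R ∧
  (∀ v : G.V, IncidentTo G R v → IncidentTo G (Finset.univ \ R) v →
     UnstableG G v ∧ StableIn G R v ∧ StableIn G (Finset.univ \ R) v) ∧
  (∀ c : List G.E, IsCohCycle G c → (∃ g ∈ c, g ∈ R) → ∀ g ∈ c, g ∈ R)

/-- A dynamical module is a minimal dynamical region. -/
def IsDynModule (G : DiGraph) (R : Finset G.E) : Prop :=
  IsDynRegion G R ∧ ∀ R' ⊆ R, IsDynRegion G R' → R' = R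

/-- `G` is a sink on `n+1` vertices. -/
def IsSinkGraph (G : DiGraph) : Prop :=
  Loopless G ∧ Fintype.card G.V = Fintype.card G.E + 1 ∧
    ∃! v : G.V, ∀ e : G.E, G.t e = v

/-- `G` is a source on `n+1` vertices. -/
def IsSourceGraph (G : DiGraph) : Prop :=
  Loopless G ∧ Fintype.card G.V = Fintype.card G.E + 1 ∧
    ∃! v : G.V, ∀ e : G.E, G.s e = v

/-- `R` spans a sink: all its edges are non-loops with a common target and
pairwise distinct sources. -/
def IsSinkSet (G : DiGraph) (R : Finset G.E) : Prop :=
  ∃ v : G.V, (∀ e ∈ R, G.t e = v ∧ G.s e ≠ v) ∧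
    ∀ e ∈ R, ∀ f ∈ R, G.s e = G.s f → e = f

/-- `R` spans a source. -/
def IsSourceSet (G : DiGraph) (R : Finset G.E) : Prop :=
  ∃ v : G.V, (∀ e ∈ R, G.s e = v ∧ G.t e ≠ v) ∧
    ∀ e ∈ R, ∀ f ∈ R, G.t e = G.t f → e = f

/-- The whole digraph `G` is a coherently oriented cycle. -/
def IsCohCycleGraph (G : DiGraph) : Prop :=
  ∃ c : List G.E, IsCohCycle G c ∧ (∀ e : G.E, e ∈ c) ∧
    ∀ v : G.V, ∃ g ∈ c, G.s g = v

/-- Rank function of the multipath matroid: the size of a largest multipath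
contained in `A`. -/
def mrank (G : DiGraph) (A : Finset G.E) : ℕ :=
  (A.powerset.filter (fun m => IsMultipath G m)).sup Finset.card

/-- The Tutte polynomial of the multipath matroid of `G`, evaluated at `(x,y)`. -/
def tutte (G : DiGraph) (x y : ℤ) : ℤ :=
  ∑ A : Finset G.E,
    (x - 1) ^ (mrank G Finset.univ - mrank G A) *
      (y - 1) ^ (A.card - mrank G A)

/-- `e` is a loop of the multipath matroid. -/
def IsMatroidLoop (G : DiGraph) (e : G.E) : Prop := ¬IsMultipath G {e}

/-- `e` is a coloop of the multipath matroid: it belongs to every maximal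
independent set. -/
def IsColoop (G : DiGraph) (e : G.E) : Prop :=
  ∀ m : Finset G.E, IsMultipath G m →
    (∀ m' : Finset G.E, IsMultipath G m' → m ⊆ m' → m' = m) → e ∈ m

/-- The digraph obtained from `G` by deleting the edge `e`. -/
def deleteEdge (G : DiGraph) (e : G.E) : DiGraph where
  V := G.V
  E := {f : G.E // f ≠ e}
  s := fun f => G.s f.val
  t := fun f => G.t f.val

/-- The vertex set of the MP-contraction `G ⫽ e`: the vertices of `G` other
than the endpoints of `e`, together with a new vertex `x = Sum.inr ()`. -/
def CVert (G : DiGraph) (e : G.E) : Type :=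
  {u : G.V // u ≠ G.s e ∧ u ≠ G.t e} ⊕ Unit

instance (G : DiGraph) (e : G.E) : Fintype (CVert G e) := by
  unfold CVert; infer_instance

instance (G : DiGraph) (e : G.E) : DecidableEq (CVert G e) := by
  unfold CVert; infer_instance

/-- Source, in `G ⫽ e`, of the edge coming from the edge `f` of `G`
(for `e = (v,w)`, the new source is `x` iff `s f ∈ {v,w}` or `t f = w`). -/
def contrS (G : DiGraph) (e f : G.E) : CVert G e :=
  if h : G.s f = G.s e ∨ G.s f = G.t e ∨ G.t f = G.t e then Sum.inr ()
  else Sum.inl ⟨G.s f, by push_neg at h; exact ⟨h.1, h.2.1⟩⟩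

/-- Target, in `G ⫽ e`, of the edge coming from the edge `f` of `G`
(for `e = (v,w)`, the new target is `x` iff `t f ∈ {v,w}` or `s f = v`). -/
def contrT (G : DiGraph) (e f : G.E) : CVert G e :=
  if h : G.t f = G.s e ∨ G.t f = G.t e ∨ G.s f = G.s e then Sum.inr ()
  else Sum.inl ⟨G.t f, by push_neg at h; exact ⟨h.1, h.2.1⟩⟩

/-- The MP-contraction `G ⫽ e`. -/
def mpContract (G : DiGraph) (e : G.E) : DiGraph where
  V := CVert G e
  E := {f : G.E // f ≠ e}
  s := fun f => contrS G e f.val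
  t := fun f => contrT G e f.val

/-- The digraph `C̃_e(G)`: the MP-contraction `G ⫽ e` with all loops at the
new vertex `x` deleted. -/
def tildeC (G : DiGraph) (e : G.E) : DiGraph where
  V := CVert G e
  E := {f : G.E // f ≠ e ∧
         ¬(contrS G e f = Sum.inr () ∧ contrT G e f = Sum.inr ())}
  s := fun f => contrS G e f.val
  t := fun f => contrT G e f.val

/-- The classical contraction `G / e` of a non-loop edge `e = (v,w)`:
identify `w` with `v` and delete `e`. -/
def contractClassical (G : DiGraph) (e : G.E) (hne : G.s e ≠ G.t e) : DiGraph where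
  V := {u : G.V // u ≠ G.t e}
  E := {f : G.E // f ≠ e}
  s := fun f => if h : G.s f.val = G.t e then ⟨G.s e, hne⟩ else ⟨G.s f.val, h⟩
  t := fun f => if h : G.t f.val = G.t e then ⟨G.s e, hne⟩ else ⟨G.t f.val, h⟩

/-- A flowing k-colouring of `G`. -/
def IsFlowing (G : DiGraph) (k : ℕ) (c : G.V → Fin k) : Prop :=
  (∀ e : G.E, c (G.s e) ≠ c (G.t e)) ∧
  (∀ e f : G.E, G.t e = G.t f → c (G.s e) = c (G.s f)) ∧
  (∀ e f : G.E, G.s e = G.s f → c (G.t e) = c (G.t f))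

/-- The number of flowing k-colourings of `G`. -/
def tau (G : DiGraph) (k : ℕ) : ℕ :=
  Nat.card {c : G.V → Fin k // IsFlowing G k c}

/-- The spanning subgraph of `G` with edge set `S`. -/
def subgraphOn (G : DiGraph) (S : Finset G.E) : DiGraph where
  V := G.V
  E := {f : G.E // f ∈ S}
  s := fun f => G.s f.val
  t := fun f => G.t f.val

/-- The underlying undirected multigraph of `G` contains a cycle
(of length ≥ 1; a single loop, or two parallel/antiparallel edges, count). -/
def HasUndirCycle (G : DiGraph) : Prop :=
  ∃ (n : ℕ) (ed : Fin n → G.E) (vx : Fin n → G.V),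
    0 < n ∧ Function.Injective ed ∧ Function.Injective vx ∧
    ∀ i : Fin n,
      (G.s (ed i) = vx i ∧ G.t (ed i) = vx ⟨(i.val + 1) % n, Nat.mod_lt _ i.pos⟩) ∨
      (G.t (ed i) = vx i ∧ G.s (ed i) = vx ⟨(i.val + 1) % n, Nat.mod_lt _ i.pos⟩)

/-- The underlying undirected multigraph of `G` is a forest. -/
def IsForestD (G : DiGraph) : Prop := ¬HasUndirCycle G

/-- The underlying undirected multigraph of `G` is a tree. -/
def IsTreeD (G : DiGraph) : Prop := ConnectedD G ∧ IsForestD G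

/-- The multipath matroid of `G` is representable over the field `F`. -/
def RepOver (G : DiGraph) (F : Type) [Field F] : Prop :=
  ∃ (n : ℕ) (N : Matrix (Fin n) G.E F),
    ∀ m : Finset G.E, IsMultipath G m ↔
      LinearIndependent F (fun f : {x : G.E // x ∈ m} => N.transpose f.val)

end DiGraph

/-- A finite undirected multigraph. -/
structure Multigraph where
  V : Type
  E : Type
  [fintV : Fintype V]
  [decV : DecidableEq V]
  [fintE : Fintype E]
  [decE : DecidableEq E]
  ends : E → Sym2 V

attribute [instance] Multigraph.fintV Multigraph.decV Multigraph.fintE Multigraph.decE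

/-- The multigraph `M` has a cycle all of whose edges lie in `F`. -/
def Multigraph.HasCycleIn (M : Multigraph) (F : Finset M.E) : Prop :=
  ∃ (n : ℕ) (ed : Fin n → M.E) (vx : Fin n → M.V),
    0 < n ∧ Function.Injective ed ∧ Function.Injective vx ∧
    (∀ i : Fin n, ed i ∈ F) ∧
    ∀ i : Fin n, M.ends (ed i) = s(vx i, vx ⟨(i.val + 1) % n, Nat.mod_lt _ i.pos⟩)

namespace MPAux
open DiGraph Finset

variable {G : DiGraph}

/-- Two edges are related if they coincide or share a target or share a source. -/
def erel (G : DiGraph) (e f : G.E) : Prop := e = f ∨ G.t e = G.t f ∨ G.s e = G.s f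

lemma erel_refl (e : G.E) : erel G e e := Or.inl rfl

lemma erel_symm {e f : G.E} (h : erel G e f) : erel G f e := by
  rcases h with h | h | h
  exacts [Or.inl h.symm, Or.inr (Or.inl h.symm), Or.inr (Or.inr h.symm)]

lemma loopless_of_forest (hF : G.IsForestD) : G.Loopless := by
  intro e he
  exact hF ⟨1, fun _ => e, fun _ => G.s e, one_pos,
    Function.injective_of_subsingleton _, Function.injective_of_subsingleton _,
    fun i => Or.inl ⟨rfl, he.symm⟩⟩

lemma key (hU : G.EdgeUnique) (hB : ¬G.HasPatternB) (hF : G.IsForestD)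
    {e f g : G.E} (hf : f ≠ e) (htf : G.t f = G.t e)
    (hg : g ≠ e) (hsg : G.s g = G.s e) : False := by
  have hl := loopless_of_forest hF
  have h02 : G.s f ≠ G.s e := fun h => hf (hU f e h htf (hl f))
  have h13 : G.t e ≠ G.t g := fun h => hg (hU g e hsg h.symm (hl g))
  have h01 : G.s f ≠ G.t e := by rw [← htf]; exact hl f
  have h21 : G.s e ≠ G.t e := hl e
  have h23 : G.s e ≠ G.t g := by rw [← hsg]; exact hl g
  have hfg : f ≠ g := by intro h; exact h13 (by rw [← h, htf])
  have h03 : G.s f ≠ G.t g := by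
    intro h
    -- triangle: contradiction with forest
    apply hF
    refine ⟨3, ![f, e, g], ![G.s f, G.t e, G.s e], three_pos, ?_, ?_, ?_⟩
    · intro i j hij
      fin_cases i <;> fin_cases j <;> simp_all <;> first | rfl | (exfalso; revert hij; simp)
    · intro i j hij
      fin_cases i <;> fin_cases j <;> simp_all
    · intro i
      fin_cases i
      · exact Or.inl ⟨rfl, htf⟩
      · exact Or.inr ⟨rfl, rfl⟩
      · exact Or.inl ⟨hsg, h.symm ▸ rfl⟩
  exact hB ⟨G.s f, G.t e, G.s e, G.t g, h01, h02, h03, (Ne.symm h21), h13, h23,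
    ⟨f, rfl, htf⟩, ⟨e, rfl, rfl⟩, ⟨g, hsg, rfl⟩⟩

lemma erel_trans (hU : G.EdgeUnique) (hB : ¬G.HasPatternB) (hF : G.IsForestD)
    {e f g : G.E} (h1 : erel G e f) (h2 : erel G f g) : erel G e g := by
  rcases h1 with rfl | h1 | h1
  · exact h2
  · rcases h2 with rfl | h2 | h2
    · exact Or.inr (Or.inl h1)
    · exact Or.inr (Or.inl (h1.trans h2))
    · by_cases hef : e = f
      · exact hef ▸ Or.inr (Or.inr h2)
      · by_cases hfg : f = g
        · exact Or.inr (Or.inl (h1.trans (hfg ▸ rfl)))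
        · exact absurd (key hU hB hF hef h1 (Ne.symm hfg) h2.symm) (fun h => h)
  · rcases h2 with rfl | h2 | h2
    · exact Or.inr (Or.inr h1)
    · by_cases hef : e = f
      · exact hef ▸ Or.inr (Or.inl h2)
      · by_cases hfg : f = g
        · exact Or.inr (Or.inr (h1.trans (hfg ▸ rfl)))
        · exact absurd (key hU hB hF (Ne.symm hfg) h2.symm hef h1) (fun h => h)
    · exact Or.inr (Or.inr (h1.trans h2))

/-- The equivalence class of an edge. -/
def cls (G : DiGraph) (e : G.E) : Finset G.E := univ.filter (erel G e)

lemma mem_cls {e f : G.E} : f ∈ cls G e ↔ erel G e f := by simp [cls]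

lemma self_mem_cls (e : G.E) : e ∈ cls G e := mem_cls.mpr (erel_refl e)

lemma cls_eq_of_erel (hU : G.EdgeUnique) (hB : ¬G.HasPatternB) (hF : G.IsForestD)
    {e f : G.E} (h : erel G e f) : cls G e = cls G f := by
  ext g
  simp only [mem_cls]
  exact ⟨fun hg => erel_trans hU hB hF (erel_symm h) hg,
    fun hg => erel_trans hU hB hF h hg⟩

lemma erel_of_cls_eq {e f : G.E} (h : cls G e = cls G f) : erel G e f :=
  mem_cls.mp (h ▸ self_mem_cls f)

lemma no_cohcycle (hF : G.IsForestD) (c : List G.E) : ¬G.IsCohCycle c := by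
  rintro ⟨hne, hnd, hnds, hcyc⟩
  apply hF
  refine ⟨c.length, fun i => c.get i, fun i => G.s (c.get i),
    List.length_pos_iff.mpr hne, List.nodup_iff_injective_get.mp hnd, ?_, ?_⟩
  · intro i j hij
    have hinj := List.nodup_iff_injective_get.mp hnds
    have hlen : c.length = (c.map G.s).length := (List.length_map _).symm
    have : (c.map G.s).get (Fin.cast hlen i) = (c.map G.s).get (Fin.cast hlen j) := by
      simpa using hij
    have := hinj this
    exact Fin.ext (congrArg Fin.val this : _)
  · intro i
    exact Or.inl ⟨rfl, hcyc i⟩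

lemma isMultipath_iff (hF : G.IsForestD) {m : Finset G.E} :
    G.IsMultipath m ↔ ∀ e ∈ m, ∀ f ∈ m, erel G e f → e = f := by
  constructor
  · rintro ⟨h1, h2, h3, h4⟩ e he f hf (h | h | h)
    exacts [h, h3 e he f hf h, h2 e he f hf h]
  · intro h
    refine ⟨fun e _ => loopless_of_forest hF e,
      fun e he f hf hsf => h e he f hf (Or.inr (Or.inr hsf)),
      fun e he f hf htf => h e he f hf (Or.inr (Or.inl htf)), ?_⟩
    rintro ⟨c, hc, -⟩
    exact no_cohcycle hF c hc

/-- Number of edge classes meeting `A`. -/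
def nc (G : DiGraph) (A : Finset G.E) : ℕ := (A.image (cls G)).card

lemma mrank_eq_nc (hU : G.EdgeUnique) (hB : ¬G.HasPatternB) (hF : G.IsForestD)
    (A : Finset G.E) : G.mrank A = nc G A := by
  apply le_antisymm
  · apply Finset.sup_le
    intro m hm
    simp only [mem_filter, mem_powerset] at hm
    obtain ⟨hmA, hmp⟩ := hm
    have hinj : Set.InjOn (cls G) m := fun e he f hf hc =>
      (isMultipath_iff hF).mp hmp e he f hf (erel_of_cls_eq hc)
    calc m.card = (m.image (cls G)).card := (Finset.card_image_of_injOn hinj).symm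
      _ ≤ (A.image (cls G)).card := Finset.card_le_card (Finset.image_subset_image hmA)
  · have pick : ∀ C ∈ A.image (cls G), ∃ a, a ∈ A ∧ cls G a = C := by
      intro C hC
      simpa using Finset.mem_image.mp hC
    choose p hpA hpc using pick
    set m := (A.image (cls G)).attach.image (fun C => p C.1 C.2) with hm
    have hinj : ∀ C1 C2 : {x // x ∈ A.image (cls G)},
        p C1.1 C1.2 = p C2.1 C2.2 → C1 = C2 := by
      intro C1 C2 h
      apply Subtype.ext
      rw [← hpc C1.1 C1.2, ← hpc C2.1 C2.2, h]
    have hsub : m ⊆ A := by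
      intro x hx
      simp only [hm, Finset.mem_image] at hx
      obtain ⟨C, _, rfl⟩ := hx
      exact hpA C.1 C.2
    have hmp : G.IsMultipath m := by
      rw [isMultipath_iff hF]
      intro e he f hf hrel
      simp only [hm, Finset.mem_image] at he hf
      obtain ⟨C1, _, rfl⟩ := he
      obtain ⟨C2, _, rfl⟩ := hf
      have : C1.1 = C2.1 := by
        rw [← hpc C1.1 C1.2, ← hpc C2.1 C2.2]
        exact cls_eq_of_erel hU hB hF hrel
      rw [hinj C1 C2 (by rw [Subtype.ext this])]
    have hcard : m.card = nc G A := by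
      rw [hm, Finset.card_image_of_injective _ (fun C1 C2 h => hinj C1 C2 h),
        Finset.card_attach]
      rfl
    calc nc G A = m.card := hcard.symm
      _ ≤ _ := Finset.le_sup (by simp [Finset.mem_filter, Finset.mem_powerset, hsub, hmp])

end MPAux
namespace MPAux

open DiGraph Finset

variable {G : DiGraph}

/-- Summand for the partition-matroid factorisation of the Tutte polynomial. -/
def tt (G : DiGraph) (x : ℤ) (B : Finset G.E) : ℤ :=
  if B.Nonempty then (-1) ^ (B.card - 1) else (x - 1)

lemma sum_powerset_tt (x : ℤ) (C : Finset G.E) (hC : C.Nonempty) :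
    ∑ B ∈ C.powerset, tt G x B = x := by
  have h0 : ∅ ∈ C.powerset := by simp
  rw [← Finset.add_sum_erase _ _ h0]
  have h1 : tt G x ∅ = x - 1 := by simp [tt]
  have key : ∀ B ∈ C.powerset.erase ∅, tt G x B = -((-1 : ℤ) ^ B.card) := by
    intro B hB
    simp only [mem_erase, mem_powerset] at hB
    have hBne : B.Nonempty := nonempty_iff_ne_empty.mpr hB.1
    have hc : 1 ≤ B.card := Finset.card_pos.mpr hBne
    have hpow : (-1 : ℤ) ^ B.card = (-1) ^ (B.card - 1) * (-1) := by
      rw [← pow_succ]; congr 1; omega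
    simp [tt, hBne, hpow]
  rw [Finset.sum_congr rfl key, Finset.sum_neg_distrib,
    Finset.sum_erase_eq_sub h0, Finset.sum_powerset_neg_one_pow_card]
  have : ¬C = ∅ := by
    intro h; exact absurd (h ▸ hC) (by simp)
  simp [this, h1]

lemma cls_disjoint (hU : G.EdgeUnique) (hB : ¬G.HasPatternB) (hF : G.IsForestD) :
    ∀ C ∈ univ.image (cls G), ∀ D ∈ univ.image (cls G), C ≠ D → Disjoint C D := by
  intro C hC D hD hne
  obtain ⟨a, -, rfl⟩ := mem_image.mp hC
  obtain ⟨b, -, rfl⟩ := mem_image.mp hD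
  rw [Finset.disjoint_left]
  intro x hx hx'
  exact hne ((cls_eq_of_erel hU hB hF (mem_cls.mp hx)).trans
    (cls_eq_of_erel hU hB hF (mem_cls.mp hx')).symm)

lemma sup_cls : ((univ.image (cls G)).sup id : Finset G.E) = univ := by
  rw [Finset.eq_univ_iff_forall]
  intro e
  rw [Finset.mem_sup]
  exact ⟨cls G e, mem_image_of_mem _ (mem_univ e), self_mem_cls e⟩

lemma sum_powerset_prod (t : Finset G.E → ℤ) :
    ∀ S : Finset (Finset G.E), (∀ C ∈ S, ∀ D ∈ S, C ≠ D → Disjoint C D) →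
    ∑ A ∈ (S.sup id).powerset, ∏ C ∈ S, t (A ∩ C) =
      ∏ C ∈ S, ∑ B ∈ C.powerset, t B := by
  intro S
  induction S using Finset.cons_induction with
  | empty => simp
  | cons C₀ S hC₀ ih =>
    intro hdisj
    have hdisj' : ∀ C ∈ S, ∀ D ∈ S, C ≠ D → Disjoint C D := fun C hC D hD =>
      hdisj C (mem_cons_of_mem hC) D (mem_cons_of_mem hD)
    have hd0 : Disjoint C₀ (S.sup id) := by
      rw [Finset.disjoint_sup_right]
      intro C hC
      exact hdisj C₀ (mem_cons_self _ _) C (mem_cons_of_mem hC)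
        (fun h => hC₀ (h ▸ hC))
    rw [Finset.sup_cons, Finset.prod_cons]
    simp only [id_eq]
    have hsplit : ∑ A ∈ (C₀ ⊔ S.sup id).powerset, ∏ C ∈ Finset.cons C₀ S hC₀, t (A ∩ C) =
        ∑ p ∈ C₀.powerset ×ˢ (S.sup id).powerset, t p.1 * ∏ C ∈ S, t (p.2 ∩ C) := by
      refine Finset.sum_nbij' (fun A => (A ∩ C₀, A ∩ S.sup id)) (fun p => p.1 ∪ p.2)
        ?_ ?_ ?_ ?_ ?_
      · intro A hA
        simp only [Finset.mem_product, mem_powerset]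
        exact ⟨inter_subset_right, inter_subset_right⟩
      · intro p hp
        simp only [Finset.mem_product, mem_powerset] at hp ⊢
        exact Finset.union_subset (hp.1.trans le_sup_left) (hp.2.trans le_sup_right)
      · intro A hA
        simp only [mem_powerset] at hA
        show A ∩ C₀ ∪ A ∩ S.sup id = A
        rw [← Finset.inter_union_distrib_left]
        exact Finset.inter_eq_left.mpr hA
      · intro p hp
        simp only [Finset.mem_product, mem_powerset] at hp
        show ((p.1 ∪ p.2) ∩ C₀, (p.1 ∪ p.2) ∩ S.sup id) = p
        have h1 : (p.1 ∪ p.2) ∩ C₀ = p.1 := by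
          rw [Finset.union_inter_distrib_right, Finset.inter_eq_left.mpr hp.1,
            Finset.disjoint_iff_inter_eq_empty.mp
              (Finset.disjoint_of_subset_left hp.2 hd0.symm)]
          exact Finset.union_empty _
        have h2 : (p.1 ∪ p.2) ∩ S.sup id = p.2 := by
          rw [Finset.union_inter_distrib_right, Finset.inter_eq_left.mpr hp.2,
            Finset.disjoint_iff_inter_eq_empty.mp
              (Finset.disjoint_of_subset_left hp.1 hd0)]
          exact Finset.empty_union _
        exact Prod.ext h1 h2
      · intro A hA
        show ∏ C ∈ Finset.cons C₀ S hC₀, t (A ∩ C) =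
          t (A ∩ C₀) * ∏ C ∈ S, t ((A ∩ S.sup id) ∩ C)
        rw [Finset.prod_cons]
        congr 1
        apply Finset.prod_congr rfl
        intro C hC
        congr 1
        have hCU : C ⊆ S.sup id := Finset.le_sup (f := id) hC
        rw [Finset.inter_assoc]
        congr 1
        exact (Finset.inter_eq_right.mpr hCU).symm
    rw [hsplit, Finset.sum_product]
    have hcong : ∀ x ∈ C₀.powerset,
        (∑ y ∈ (S.sup id).powerset, t (x, y).1 * ∏ C ∈ S, t ((x, y).2 ∩ C)) =
        t x * ∑ A ∈ (S.sup id).powerset, ∏ C ∈ S, t (A ∩ C) := by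
      intro x _
      rw [Finset.mul_sum]
    rw [Finset.sum_congr rfl hcong, ← ih hdisj', Finset.sum_mul]

lemma term_prod (hU : G.EdgeUnique) (hB : ¬G.HasPatternB) (hF : G.IsForestD)
    (x : ℤ) (A : Finset G.E) :
    (x - 1) ^ (nc G univ - nc G A) * (-1 : ℤ) ^ (A.card - nc G A)
      = ∏ C ∈ univ.image (cls G), tt G x (A ∩ C) := by
  set K := (univ.image (cls G) : Finset (Finset G.E)) with hK
  have hdisj := cls_disjoint hU hB hF
  have f1 : A = K.biUnion (fun C => A ∩ C) := by
    ext a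
    simp only [Finset.mem_biUnion, Finset.mem_inter]
    constructor
    · intro ha
      exact ⟨cls G a, mem_image_of_mem _ (mem_univ a), ha, self_mem_cls a⟩
    · rintro ⟨C, -, ha, -⟩; exact ha
  have f2 : ∑ C ∈ K, (A ∩ C).card = A.card := by
    rw [← Finset.card_biUnion, ← f1]
    intro C hC D hD hne
    exact (hdisj C hC D hD hne).mono inter_subset_right inter_subset_right
  have f3 : A.image (cls G) = K.filter (fun C => (A ∩ C).Nonempty) := by
    ext C
    simp only [Finset.mem_image, Finset.mem_filter]
    constructor
    · rintro ⟨a, ha, rfl⟩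
      exact ⟨mem_image_of_mem _ (mem_univ a), a, Finset.mem_inter.mpr ⟨ha, self_mem_cls a⟩⟩
    · rintro ⟨hCK, a, haC⟩
      rw [hK] at hCK
      obtain ⟨b, -, rfl⟩ := mem_image.mp hCK
      rw [Finset.mem_inter] at haC
      exact ⟨a, haC.1, (cls_eq_of_erel hU hB hF (mem_cls.mp haC.2)).symm⟩
  have hncA : nc G A = (K.filter (fun C => (A ∩ C).Nonempty)).card := by
    rw [nc, f3]
  have hncU : nc G univ = K.card := rfl
  have hprod : ∏ C ∈ K, tt G x (A ∩ C) =
      (∏ C ∈ K.filter (fun C => (A ∩ C).Nonempty), (-1 : ℤ) ^ ((A ∩ C).card - 1)) *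
      ∏ C ∈ K.filter (fun C => ¬(A ∩ C).Nonempty), (x - 1) := by
    rw [← Finset.prod_ite]
    rfl
  have hcards : (K.filter (fun C => (A ∩ C).Nonempty)).card +
      (K.filter (fun C => ¬(A ∩ C).Nonempty)).card = K.card :=
    Finset.card_filter_add_card_filter_not _
  have hsum1 : ∑ C ∈ K.filter (fun C => (A ∩ C).Nonempty), (A ∩ C).card = A.card := by
    rw [← f2]
    exact Finset.sum_filter_of_ne (fun C _ h => Finset.card_pos.mp (Nat.pos_of_ne_zero h))
  have hsum2 : ∑ C ∈ K.filter (fun C => (A ∩ C).Nonempty), ((A ∩ C).card - 1) =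
      A.card - nc G A := by
    have : ∑ C ∈ K.filter (fun C => (A ∩ C).Nonempty), ((A ∩ C).card - 1) +
        ∑ C ∈ K.filter (fun C => (A ∩ C).Nonempty), 1 =
        ∑ C ∈ K.filter (fun C => (A ∩ C).Nonempty), (A ∩ C).card := by
      rw [← Finset.sum_add_distrib]
      apply Finset.sum_congr rfl
      intro C hC
      have := (Finset.mem_filter.mp hC).2
      have hc1 : 1 ≤ (A ∩ C).card := Finset.card_pos.mpr this
      omega
    rw [hsum1, Finset.sum_const, smul_eq_mul, mul_one] at this
    rw [hncA]
    omega
  rw [hprod, Finset.prod_const, Finset.prod_pow_eq_pow_sum, hsum2]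
  have hfneg : (K.filter (fun C => ¬(A ∩ C).Nonempty)).card =
      nc G univ - nc G A := by
    rw [hncA, hncU]
    omega
  rw [hfneg]
  ring

lemma tutte_eq (hU : G.EdgeUnique) (hB : ¬G.HasPatternB) (hF : G.IsForestD)
    (x : ℤ) : G.tutte x 0 = x ^ (nc G univ) := by
  unfold DiGraph.tutte
  have step1 : ∀ A : Finset G.E,
      (x - 1) ^ (G.mrank univ - G.mrank A) * ((0 : ℤ) - 1) ^ (A.card - G.mrank A) =
      ∏ C ∈ univ.image (cls G), tt G x (A ∩ C) := by
    intro A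
    rw [mrank_eq_nc hU hB hF, mrank_eq_nc hU hB hF]
    have : ((0 : ℤ) - 1) = -1 := by norm_num
    rw [this]
    exact term_prod hU hB hF x A
  rw [Finset.sum_congr rfl (fun A _ => step1 A)]
  have : (univ : Finset (Finset G.E)) = ((univ.image (cls G)).sup id).powerset := by
    rw [sup_cls, powerset_univ]
  rw [this, sum_powerset_prod (tt G x) _ (cls_disjoint hU hB hF)]
  have : ∀ C ∈ univ.image (cls G), ∑ B ∈ C.powerset, tt G x B = x := by
    intro C hC
    obtain ⟨a, -, rfl⟩ := mem_image.mp hC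
    exact sum_powerset_tt x _ ⟨a, self_mem_cls a⟩
  rw [Finset.prod_congr rfl this, Finset.prod_const]
  rfl



end MPAux
namespace MPAux
open DiGraph Finset

variable {G : DiGraph}

lemma exists_ne_incident (hl : G.Loopless)
    (hdeg : ∀ v : G.V, G.indeg v + G.outdeg v ≠ 1)
    {e : G.E} {w : G.V} (hew : G.s e = w ∨ G.t e = w) :
    ∃ f, f ≠ e ∧ (G.s f = w ∨ G.t f = w) := by
  by_contra hcon
  push_neg at hcon
  have hsub1 : univ.filter (fun f => G.t f = w) ⊆ {e} := by
    intro f hf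
    simp only [mem_filter] at hf
    simp only [mem_singleton]
    by_contra hne
    exact (hcon f hne).2 hf.2
  have hsub2 : univ.filter (fun f => G.s f = w) ⊆ {e} := by
    intro f hf
    simp only [mem_filter] at hf
    simp only [mem_singleton]
    by_contra hne
    exact (hcon f hne).1 hf.2
  have h1 : G.indeg w ≤ 1 := by
    have := Finset.card_le_card hsub1
    simpa [DiGraph.indeg, DiGraph.indegIn] using this
  have h2 : G.outdeg w ≤ 1 := by
    have := Finset.card_le_card hsub2
    simpa [DiGraph.outdeg, DiGraph.outdegIn] using this
  have hge : 1 ≤ G.indeg w + G.outdeg w := by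
    rcases hew with h | h
    · have : e ∈ univ.filter (fun f => G.s f = w) := by simp [h]
      have := Finset.card_pos.mpr ⟨e, this⟩
      unfold DiGraph.outdeg DiGraph.outdegIn
      omega
    · have : e ∈ univ.filter (fun f => G.t f = w) := by simp [h]
      have := Finset.card_pos.mpr ⟨e, this⟩
      unfold DiGraph.indeg DiGraph.indegIn
      omega
  have hne2 : G.indeg w + G.outdeg w ≠ 2 := by
    intro h2'
    have hi1 : G.indeg w = 1 := by omega
    have ho1 : G.outdeg w = 1 := by omega
    have he1 : univ.filter (fun f => G.t f = w) = {e} :=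
      Finset.eq_of_subset_of_card_le hsub1 (by rw [Finset.card_singleton]; exact hi1.ge)
    have he2 : univ.filter (fun f => G.s f = w) = {e} :=
      Finset.eq_of_subset_of_card_le hsub2 (by rw [Finset.card_singleton]; exact ho1.ge)
    have ht : G.t e = w := by
      have : e ∈ univ.filter (fun f => G.t f = w) := he1 ▸ Finset.mem_singleton_self e
      simpa using this
    have hs : G.s e = w := by
      have : e ∈ univ.filter (fun f => G.s f = w) := he2 ▸ Finset.mem_singleton_self e
      simpa using this
    exact hl e (hs.trans ht.symm)
  exact hdeg w (by omega)

lemma exists_leaf (hl : G.Loopless) (hF : G.IsForestD) (e0 : G.E) :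
    ∃ w, G.indeg w + G.outdeg w = 1 := by
  by_contra hdeg
  push_neg at hdeg
  have hstep : ∀ p : G.E × G.V, ∃ q : G.E × G.V,
      (G.s p.1 = p.2 ∨ G.t p.1 = p.2) →
        (q.1 ≠ p.1 ∧ (G.s q.1 = q.2 ∨ G.t q.1 = q.2) ∧
          ((G.s p.1 = p.2 ∧ G.t p.1 = q.2) ∨ (G.t p.1 = p.2 ∧ G.s p.1 = q.2))) := by
    intro p
    by_cases h : G.s p.1 = p.2 ∨ G.t p.1 = p.2
    · by_cases hs : G.s p.1 = p.2
      · obtain ⟨f, hf, hfi⟩ :=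
          exists_ne_incident hl hdeg (e := p.1) (w := G.t p.1) (Or.inr rfl)
        exact ⟨(f, G.t p.1), fun _ => ⟨hf, hfi, Or.inl ⟨hs, rfl⟩⟩⟩
      · have ht : G.t p.1 = p.2 := h.resolve_left hs
        obtain ⟨f, hf, hfi⟩ :=
          exists_ne_incident hl hdeg (e := p.1) (w := G.s p.1) (Or.inl rfl)
        exact ⟨(f, G.s p.1), fun _ => ⟨hf, hfi, Or.inr ⟨ht, rfl⟩⟩⟩
    · exact ⟨p, fun hc => absurd hc h⟩
  choose step hstepspec using hstep
  set σ : ℕ → G.E × G.V := fun n => step^[n] (e0, G.s e0) with hσ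
  have hiter : ∀ n, σ (n + 1) = step (σ n) := fun n =>
    Function.iterate_succ_apply' _ _ _
  have hinc : ∀ n, G.s (σ n).1 = (σ n).2 ∨ G.t (σ n).1 = (σ n).2 := by
    intro n
    induction n with
    | zero => exact Or.inl rfl
    | succ n ih =>
      rw [hiter n]
      exact (hstepspec (σ n) ih).2.1
  have hfacts : ∀ n, (σ (n + 1)).1 ≠ (σ n).1 ∧
      ((G.s (σ n).1 = (σ n).2 ∧ G.t (σ n).1 = (σ (n + 1)).2) ∨
        (G.t (σ n).1 = (σ n).2 ∧ G.s (σ n).1 = (σ (n + 1)).2)) := by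
    intro n
    rw [hiter n]
    have h := hstepspec (σ n) (hinc n)
    exact ⟨h.1, h.2.2⟩
  obtain ⟨a, b, hab, hvab⟩ :=
    Finite.exists_ne_map_eq_of_infinite (fun n => (σ n).2)
  have hexists : ∃ j, ∃ i, i < j ∧ (σ i).2 = (σ j).2 := by
    rcases hab.lt_or_gt with h | h
    exacts [⟨b, a, h, hvab⟩, ⟨a, b, h, hvab.symm⟩]
  obtain ⟨i0, hi0j, hv0⟩ := Nat.find_spec hexists
  set j0 := Nat.find hexists with hj0
  have hdist' : ∀ p q, p < j0 → q < j0 → (σ p).2 = (σ q).2 → p = q := by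
    intro p q hp hq h
    rcases lt_trichotomy p q with hlt | he | hlt
    · exact absurd ⟨p, hlt, h⟩ (Nat.find_min hexists hq)
    · exact he
    · exact absurd ⟨q, hlt, h.symm⟩ (Nat.find_min hexists hp)
  set n := j0 - i0 with hn
  have hi0j' : i0 < j0 := hi0j
  have hnpos : 0 < n := by omega
  apply hF
  refine ⟨n, fun a => (σ (i0 + a.val)).1, fun a => (σ (i0 + a.val)).2, hnpos,
    ?_, ?_, ?_⟩
  · -- edges injective
    have core : ∀ a b : Fin n, a.val < b.val →
        (σ (i0 + a.val)).1 = (σ (i0 + b.val)).1 → False := by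
      intro a b hab hEeq
      have hma : i0 + a.val < j0 := by omega
      have hmb : i0 + b.val < j0 := by omega
      have hA := (hfacts (i0 + a.val)).2
      have hB := (hfacts (i0 + b.val)).2
      have hpair : ((σ (i0 + a.val)).2 = (σ (i0 + b.val)).2 ∧
            (σ (i0 + a.val + 1)).2 = (σ (i0 + b.val + 1)).2) ∨
          ((σ (i0 + a.val)).2 = (σ (i0 + b.val + 1)).2 ∧
            (σ (i0 + a.val + 1)).2 = (σ (i0 + b.val)).2) := by
        rcases hA with ⟨a1, a2⟩ | ⟨a1, a2⟩ <;> rcases hB with ⟨b1, b2⟩ | ⟨b1, b2⟩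
        · exact Or.inl ⟨by rw [← a1, hEeq, b1], by rw [← a2, hEeq, b2]⟩
        · exact Or.inr ⟨by rw [← a1, hEeq, b2], by rw [← a2, hEeq, b1]⟩
        · exact Or.inr ⟨by rw [← a1, hEeq, b2], by rw [← a2, hEeq, b1]⟩
        · exact Or.inl ⟨by rw [← a1, hEeq, b1], by rw [← a2, hEeq, b2]⟩
      rcases hpair with ⟨h1, h2⟩ | ⟨h1, h2⟩
      · exact absurd (hdist' _ _ hma hmb h1) (by omega)
      · rcases Nat.lt_or_ge (i0 + b.val + 1) j0 with hlt | hge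
        · exact absurd (hdist' _ _ hma hlt h1) (by omega)
        · have hbj : i0 + b.val + 1 = j0 := by omega
          have h1' : (σ (i0 + a.val)).2 = (σ i0).2 := by
            rw [h1, hbj]
            exact hv0.symm
          have hai : i0 + a.val = i0 := hdist' _ _ hma (by omega) h1'
          have hsucc : i0 + a.val + 1 = i0 + b.val :=
            hdist' _ _ (by omega) hmb h2
          exact (hfacts (i0 + a.val)).1 (by rw [hsucc]; exact hEeq.symm)
    intro a b h
    by_contra hne
    have hne' : a.val ≠ b.val := fun hh => hne (Fin.ext hh)
    rcases hne'.lt_or_gt with hlt | hlt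
    · exact core a b hlt h
    · exact core b a hlt h.symm
  · -- vertices injective
    intro a b h
    have hma : i0 + a.val < j0 := by omega
    have hmb : i0 + b.val < j0 := by omega
    have := hdist' _ _ hma hmb h
    exact Fin.ext (by omega)
  · intro a
    have hf := (hfacts (i0 + a.val)).2
    have hnext : (σ (i0 + ((a.val + 1) % n))).2 = (σ (i0 + a.val + 1)).2 := by
      rcases Nat.lt_or_ge (a.val + 1) n with h | h
      · rw [Nat.mod_eq_of_lt h]
        exact congrArg (fun m => (σ m).2) (by omega)
      · have hav : a.val + 1 = n := by omega
        rw [hav, Nat.mod_self]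
        have hj : i0 + a.val + 1 = j0 := by omega
        rw [hj, Nat.add_zero]
        exact hv0
    rcases hf with ⟨h1, h2⟩ | ⟨h1, h2⟩
    · exact Or.inl ⟨h1, h2.trans hnext.symm⟩
    · exact Or.inr ⟨h1, h2.trans hnext.symm⟩

end MPAux
namespace MPAux
open DiGraph Finset

/-- Delete a leaf vertex `w` together with its unique edge `e`. -/
@[reducible] def delLeaf (G : DiGraph) (w : G.V) (e : G.E)
    (h : ∀ f : G.E, f ≠ e → G.s f ≠ w ∧ G.t f ≠ w) : DiGraph where
  V := {v : G.V // v ≠ w}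
  E := {f : G.E // f ≠ e}
  s := fun f => ⟨G.s f.1, (h f.1 f.2).1⟩
  t := fun f => ⟨G.t f.1, (h f.1 f.2).2⟩

variable {G : DiGraph} {w : G.V} {e : G.E}
  (hA : ∀ f : G.E, f ≠ e → G.s f ≠ w ∧ G.t f ≠ w)

lemma delLeaf_edgeUnique (hU : G.EdgeUnique) : (delLeaf G w e hA).EdgeUnique := by
  intro f g hs ht hne
  exact Subtype.ext (hU f.1 g.1 (congrArg Subtype.val hs) (congrArg Subtype.val ht)
    (fun hh => hne (Subtype.ext hh)))

lemma delLeaf_patternB (hB : ¬G.HasPatternB) : ¬(delLeaf G w e hA).HasPatternB := by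
  rintro ⟨v0, v1, v2, v3, h01, h02, h03, h12, h13, h23,
    ⟨e1, he1s, he1t⟩, ⟨e2, he2s, he2t⟩, ⟨e3, he3s, he3t⟩⟩
  exact hB ⟨v0.1, v1.1, v2.1, v3.1,
    fun h => h01 (Subtype.ext h), fun h => h02 (Subtype.ext h),
    fun h => h03 (Subtype.ext h), fun h => h12 (Subtype.ext h),
    fun h => h13 (Subtype.ext h), fun h => h23 (Subtype.ext h),
    ⟨e1.1, congrArg Subtype.val he1s, congrArg Subtype.val he1t⟩,
    ⟨e2.1, congrArg Subtype.val he2s, congrArg Subtype.val he2t⟩,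
    ⟨e3.1, congrArg Subtype.val he3s, congrArg Subtype.val he3t⟩⟩

lemma delLeaf_forest (hF : G.IsForestD) : (delLeaf G w e hA).IsForestD := by
  rintro ⟨n, ed, vx, hpos, hedinj, hvxinj, hcond⟩
  refine hF ⟨n, fun i => (ed i).1, fun i => (vx i).1, hpos,
    fun i j h => hedinj (Subtype.ext h), fun i j h => hvxinj (Subtype.ext h), ?_⟩
  intro i
  rcases hcond i with ⟨h1, h2⟩ | ⟨h1, h2⟩
  · exact Or.inl ⟨congrArg Subtype.val h1, congrArg Subtype.val h2⟩
  · exact Or.inr ⟨congrArg Subtype.val h1, congrArg Subtype.val h2⟩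

lemma delLeaf_connected (hT : G.ConnectedD) {z0 : G.V} (hz0 : z0 ≠ w)
    (hOr : (G.s e = w ∧ G.t e = z0) ∨ (G.t e = w ∧ G.s e = z0)) :
    (delLeaf G w e hA).ConnectedD := by
  classical
  set G' := delLeaf G w e hA with hG'
  let L : G.V → G'.V := fun v => if h : v = w then ⟨z0, hz0⟩ else ⟨v, h⟩
  have hLwz : ∀ v : G.V, v = w ∨ v = z0 → L v = ⟨z0, hz0⟩ := by
    intro v hv
    show (if h : v = w then (⟨z0, hz0⟩ : G'.V) else ⟨v, h⟩) = ⟨z0, hz0⟩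
    rcases hv with h | h
    · rw [dif_pos h]
    · subst h
      rw [dif_neg hz0]
  have hLne : ∀ (v : G.V) (h : v ≠ w), L v = ⟨v, h⟩ := by
    intro v h
    simp only [L, dif_neg h]
  have main : ∀ a b : G.V, G.connRel a b → G'.connRel (L a) (L b) := by
    intro a b h
    induction h with
    | rel x y hxy =>
      obtain ⟨f, hf⟩ := hxy
      by_cases hfe : f = e
      · subst hfe
        have hx : x = w ∨ x = z0 := by
          rcases hOr with ⟨h1, h2⟩ | ⟨h1, h2⟩ <;> rcases hf with ⟨g1, g2⟩ | ⟨g1, g2⟩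
          · exact Or.inl (g1.symm.trans h1)
          · exact Or.inr (g2.symm.trans h2)
          · exact Or.inr (g1.symm.trans h2)
          · exact Or.inl (g2.symm.trans h1)
        have hy : y = w ∨ y = z0 := by
          rcases hOr with ⟨h1, h2⟩ | ⟨h1, h2⟩ <;> rcases hf with ⟨g1, g2⟩ | ⟨g1, g2⟩
          · exact Or.inr (g2.symm.trans h2)
          · exact Or.inl (g1.symm.trans h1)
          · exact Or.inl (g2.symm.trans h1)
          · exact Or.inr (g1.symm.trans h2)
        rw [hLwz x hx, hLwz y hy]
        exact Relation.EqvGen.refl _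
      · have hsx := (hA f hfe).1
        have htx := (hA f hfe).2
        rcases hf with ⟨h1, h2⟩ | ⟨h1, h2⟩
        · rw [hLne x (fun hh => hsx (h1.trans hh)), hLne y (fun hh => htx (h2.trans hh))]
          exact Relation.EqvGen.rel _ _
            ⟨⟨f, hfe⟩, Or.inl ⟨Subtype.ext h1, Subtype.ext h2⟩⟩
        · rw [hLne x (fun hh => htx (h2.trans hh)), hLne y (fun hh => hsx (h1.trans hh))]
          exact Relation.EqvGen.rel _ _
            ⟨⟨f, hfe⟩, Or.inr ⟨Subtype.ext h1, Subtype.ext h2⟩⟩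
    | refl x => exact Relation.EqvGen.refl _
    | symm x y _ ih => exact Relation.EqvGen.symm _ _ ih
    | trans x y z _ _ ih1 ih2 => exact Relation.EqvGen.trans _ _ _ ih1 ih2
  refine ⟨⟨⟨z0, hz0⟩⟩, ?_⟩
  intro v v'
  have h := main v.1 v'.1 (hT.2 v.1 v'.1)
  rwa [hLne v.1 v.2, hLne v'.1 v'.2, Subtype.coe_eta, Subtype.coe_eta] at h

lemma erel_delLeaf {f g : (delLeaf G w e hA).E} :
    erel (delLeaf G w e hA) f g ↔ erel G f.1 g.1 := by
  unfold erel
  rw [Subtype.ext_iff, Subtype.ext_iff, Subtype.ext_iff]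

lemma image_val_univ :
    (univ : Finset {f : G.E // f ≠ e}).image Subtype.val = univ.erase e := by
  ext g
  constructor
  · intro hg
    obtain ⟨g', -, rfl⟩ := Finset.mem_image.mp hg
    exact Finset.mem_erase.mpr ⟨g'.2, Finset.mem_univ _⟩
  · intro hg
    exact Finset.mem_image.mpr ⟨⟨g, (Finset.mem_erase.mp hg).1⟩, Finset.mem_univ _, rfl⟩

lemma delLeaf_cls_val (f : (delLeaf G w e hA).E) :
    (cls (delLeaf G w e hA) f).image Subtype.val = (cls G f.1).erase e := by
  ext g
  simp only [Finset.mem_image, Finset.mem_erase, mem_cls]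
  constructor
  · rintro ⟨g', hg', rfl⟩
    exact ⟨g'.2, (erel_delLeaf hA).mp (mem_cls.mp hg')⟩
  · rintro ⟨hge, hrel⟩
    exact ⟨⟨g, hge⟩, mem_cls.mpr ((erel_delLeaf hA).mpr hrel), rfl⟩

lemma nc_delLeaf : nc (delLeaf G w e hA) univ =
    ((univ.erase e).image (fun f => (cls G f).erase e)).card := by
  unfold nc
  rw [← Finset.card_image_of_injective _ (Finset.image_injective Subtype.val_injective)]
  congr 1
  rw [Finset.image_image, ← image_val_univ (G := G) (e := e), Finset.image_image]
  apply Finset.image_congr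
  intro f _
  exact delLeaf_cls_val hA f

lemma nc_delLeaf_single (hU : G.EdgeUnique) (hB : ¬G.HasPatternB) (hF : G.IsForestD)
    (hsing : ∀ f : G.E, f ≠ e → ¬erel G e f) :
    nc G univ = nc (delLeaf G w e hA) univ + 1 := by
  rw [nc_delLeaf]
  have hclse : cls G e = {e} := by
    ext f
    simp only [mem_cls, Finset.mem_singleton]
    constructor
    · intro h
      by_contra hne
      exact hsing f hne h
    · rintro rfl
      exact erel_refl _
  have hnotmem : ∀ f : G.E, f ≠ e → e ∉ cls G f := fun f hf hmem =>
    hsing f hf (erel_symm (mem_cls.mp hmem))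
  have hJ : (univ.erase e).image (fun f => (cls G f).erase e) =
      (univ.erase e).image (cls G) := by
    apply Finset.image_congr
    intro f hf
    rw [Finset.coe_erase, Set.mem_diff] at hf
    exact Finset.erase_eq_of_notMem (hnotmem f (by simpa using hf.2))
  have hI : univ.image (cls G) = insert ({e} : Finset G.E) ((univ.erase e).image (cls G)) := by
    conv_lhs => rw [← Finset.insert_erase (Finset.mem_univ e)]
    rw [Finset.image_insert, hclse]
  have hnot : ({e} : Finset G.E) ∉ (univ.erase e).image (cls G) := by
    intro hmem
    obtain ⟨f, hf, hfe⟩ := Finset.mem_image.mp hmem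
    have hself := self_mem_cls (G := G) f
    rw [hfe] at hself
    exact (Finset.mem_erase.mp hf).1 (Finset.mem_singleton.mp hself)
  rw [nc, hI, Finset.card_insert_of_notMem hnot, hJ]

lemma nc_delLeaf_multi (hU : G.EdgeUnique) (hB : ¬G.HasPatternB) (hF : G.IsForestD)
    {f0 : G.E} (hf0 : f0 ≠ e) (hrel : erel G e f0) :
    nc G univ = nc (delLeaf G w e hA) univ := by
  rw [nc_delLeaf]
  set P := ((univ.filter (fun f => ¬erel G e f)).image (cls G) : Finset (Finset G.E)) with hP
  have hI : univ.image (cls G) = insert (cls G e) P := by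
    ext C
    simp only [Finset.mem_image, Finset.mem_insert, Finset.mem_filter, hP, Finset.mem_univ,
      true_and]
    constructor
    · rintro ⟨f, -, rfl⟩
      by_cases h : erel G e f
      · exact Or.inl (cls_eq_of_erel hU hB hF h).symm
      · exact Or.inr ⟨f, h, rfl⟩
    · rintro (rfl | ⟨f, -, rfl⟩)
      exacts [⟨e, rfl⟩, ⟨f, rfl⟩]
  have hJ : (univ.erase e).image (fun f => (cls G f).erase e) =
      insert ((cls G e).erase e) P := by
    ext C
    simp only [Finset.mem_image, Finset.mem_insert, Finset.mem_erase, Finset.mem_filter,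
      hP, Finset.mem_univ, true_and, and_true]
    constructor
    · rintro ⟨f, hfe, rfl⟩
      by_cases h : erel G e f
      · exact Or.inl (by rw [cls_eq_of_erel hU hB hF h])
      · refine Or.inr ⟨f, h, ?_⟩
        rw [Finset.erase_eq_of_notMem (fun hmem => h (erel_symm (mem_cls.mp hmem)))]
    · rintro (rfl | ⟨f, h, rfl⟩)
      · exact ⟨f0, hf0, by rw [cls_eq_of_erel hU hB hF hrel]⟩
      · have hfe : f ≠ e := fun hh => h (hh ▸ erel_refl e)
        exact ⟨f, hfe,
          Finset.erase_eq_of_notMem (fun hmem => h (erel_symm (mem_cls.mp hmem)))⟩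
  have hnot1 : cls G e ∉ P := by
    intro hmem
    obtain ⟨f, hf, hfe⟩ := Finset.mem_image.mp hmem
    have hself := self_mem_cls (G := G) f
    rw [hfe] at hself
    exact (Finset.mem_filter.mp hf).2 (mem_cls.mp hself)
  have hnot2 : (cls G e).erase e ∉ P := by
    intro hmem
    obtain ⟨f, hf, hfe⟩ := Finset.mem_image.mp hmem
    have hself := self_mem_cls (G := G) f
    rw [hfe] at hself
    exact (Finset.mem_filter.mp hf).2 (mem_cls.mp (Finset.mem_of_mem_erase hself))
  rw [nc, hI, hJ, Finset.card_insert_of_notMem hnot1, Finset.card_insert_of_notMem hnot2]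

lemma leaf_spec {w : G.V} (hdeg : G.indeg w + G.outdeg w = 1) :
    ∃ e : G.E, ((G.s e = w ∧ G.t e ≠ w) ∨ (G.t e = w ∧ G.s e ≠ w)) ∧
      ∀ f : G.E, f ≠ e → G.s f ≠ w ∧ G.t f ≠ w := by
  unfold DiGraph.indeg DiGraph.outdeg DiGraph.indegIn DiGraph.outdegIn at hdeg
  rcases Nat.eq_zero_or_pos (univ.filter (fun f => G.s f = w)).card with h0 | hpos
  · -- no outgoing edge: one incoming
    have h1 : (univ.filter (fun f => G.t f = w)).card = 1 := by omega
    obtain ⟨e, he⟩ := Finset.card_eq_one.mp h1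
    have hte : G.t e = w := by
      have : e ∈ univ.filter (fun f => G.t f = w) := he ▸ Finset.mem_singleton_self e
      simpa using this
    have hs0 : univ.filter (fun f => G.s f = w) = ∅ := Finset.card_eq_zero.mp h0
    have hse : G.s e ≠ w := by
      intro h
      have : e ∈ univ.filter (fun f => G.s f = w) := by simp [h]
      rw [hs0] at this
      exact absurd this (Finset.notMem_empty e)
    refine ⟨e, Or.inr ⟨hte, hse⟩, ?_⟩
    intro f hfe
    constructor
    · intro h
      have : f ∈ univ.filter (fun f => G.s f = w) := by simp [h]
      rw [hs0] at this
      exact absurd this (Finset.notMem_empty f)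
    · intro h
      have : f ∈ univ.filter (fun f => G.t f = w) := by simp [h]
      rw [he] at this
      exact hfe (Finset.mem_singleton.mp this)
  · -- there is an outgoing edge
    have h1 : (univ.filter (fun f => G.s f = w)).card = 1 ∧
        (univ.filter (fun f => G.t f = w)).card = 0 := by omega
    obtain ⟨e, he⟩ := Finset.card_eq_one.mp h1.1
    have hse : G.s e = w := by
      have : e ∈ univ.filter (fun f => G.s f = w) := he ▸ Finset.mem_singleton_self e
      simpa using this
    have ht0 : univ.filter (fun f => G.t f = w) = ∅ := Finset.card_eq_zero.mp h1.2
    have hte : G.t e ≠ w := by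
      intro h
      have : e ∈ univ.filter (fun f => G.t f = w) := by simp [h]
      rw [ht0] at this
      exact absurd this (Finset.notMem_empty e)
    refine ⟨e, Or.inl ⟨hse, hte⟩, ?_⟩
    intro f hfe
    constructor
    · intro h
      have : f ∈ univ.filter (fun f => G.s f = w) := by simp [h]
      rw [he] at this
      exact hfe (Finset.mem_singleton.mp this)
    · intro h
      have : f ∈ univ.filter (fun f => G.t f = w) := by simp [h]
      rw [ht0] at this
      exact absurd this (Finset.notMem_empty f)

end MPAux
namespace MPAux
open DiGraph Finset

variable {G : DiGraph} {w : G.V} {e : G.E}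
  (hA : ∀ f : G.E, f ≠ e → G.s f ≠ w ∧ G.t f ≠ w)

lemma flowing_restrict {k : ℕ} (c : G.V → Fin k) (hc : G.IsFlowing k c) :
    (delLeaf G w e hA).IsFlowing k (fun v' => c v'.1) :=
  ⟨fun f => hc.1 f.1,
   fun f g h => hc.2.1 f.1 g.1 (congrArg Subtype.val h),
   fun f g h => hc.2.2 f.1 g.1 (congrArg Subtype.val h)⟩

/-- Extension of a colouring of `G - w` to `G`, assigning `x` to `w`. -/
def extFun (G : DiGraph) (w : G.V) (k : ℕ) (x : Fin k)
    (c : {v : G.V // v ≠ w} → Fin k) : G.V → Fin k :=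
  fun v => if h : v = w then x else c ⟨v, h⟩

lemma extFun_w {k : ℕ} (x : Fin k) (c : {v : G.V // v ≠ w} → Fin k) :
    extFun G w k x c w = x := dif_pos rfl

lemma extFun_ne {k : ℕ} (x : Fin k) (c : {v : G.V // v ≠ w} → Fin k)
    {v : G.V} (h : v ≠ w) : extFun G w k x c v = c ⟨v, h⟩ := dif_neg h

lemma tau_delLeaf_single {z0 : G.V} (hz0 : z0 ≠ w)
    (hOr : (G.s e = w ∧ G.t e = z0) ∨ (G.t e = w ∧ G.s e = z0))
    (hsing : ∀ f : G.E, f ≠ e → ¬erel G e f) (k : ℕ) :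
    G.tau k = (delLeaf G w e hA).tau k * (k - 1) := by
  classical
  set G' := delLeaf G w e hA with hG'
  let R : {c : G.V → Fin k // G.IsFlowing k c} →
      {c' : G'.V → Fin k // G'.IsFlowing k c'} :=
    fun c => ⟨fun v' => c.1 v'.1, flowing_restrict hA c.1 c.2⟩
  have hfib : ∀ c' : {c' : G'.V → Fin k // G'.IsFlowing k c'},
      Nat.card {c // R c = c'} = k - 1 := by
    intro c'
    have hflow : ∀ x : {x : Fin k // x ≠ c'.1 ⟨z0, hz0⟩},
        G.IsFlowing k (extFun G w k x.1 c'.1) := by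
      intro x
      refine ⟨?_, ?_, ?_⟩
      · intro f
        by_cases hfe : f = e
        · subst hfe
          rcases hOr with ⟨h1, h2⟩ | ⟨h1, h2⟩
          · rw [h1, h2, extFun_w, extFun_ne _ _ hz0]
            exact x.2
          · rw [h1, h2, extFun_w, extFun_ne _ _ hz0]
            exact fun hh => x.2 hh.symm
        · rw [extFun_ne _ _ (hA f hfe).1, extFun_ne _ _ (hA f hfe).2]
          exact c'.2.1 ⟨f, hfe⟩
      · intro f g htfg
        by_cases hfe : f = e <;> by_cases hge : g = e
        · subst hfe; subst hge; rfl
        · subst hfe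
          exact absurd (Or.inr (Or.inl htfg)) (hsing g hge)
        · subst hge
          exact absurd (Or.inr (Or.inl htfg.symm)) (hsing f hfe)
        · rw [extFun_ne _ _ (hA f hfe).1, extFun_ne _ _ (hA g hge).1]
          exact c'.2.2.1 ⟨f, hfe⟩ ⟨g, hge⟩ (Subtype.ext htfg)
      · intro f g hsfg
        by_cases hfe : f = e <;> by_cases hge : g = e
        · subst hfe; subst hge; rfl
        · subst hfe
          exact absurd (Or.inr (Or.inr hsfg)) (hsing g hge)
        · subst hge
          exact absurd (Or.inr (Or.inr hsfg.symm)) (hsing f hfe)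
        · rw [extFun_ne _ _ (hA f hfe).2, extFun_ne _ _ (hA g hge).2]
          exact c'.2.2.2 ⟨f, hfe⟩ ⟨g, hge⟩ (Subtype.ext hsfg)
    have hequiv : {c // R c = c'} ≃ {x : Fin k // x ≠ c'.1 ⟨z0, hz0⟩} := by
      refine ⟨fun p => ⟨p.1.1 w, ?_⟩,
        fun x => ⟨⟨extFun G w k x.1 c'.1, hflow x⟩, ?_⟩, ?_, ?_⟩
      · have hcz : c'.1 ⟨z0, hz0⟩ = p.1.1 z0 :=
          (congrFun (congrArg Subtype.val p.2) ⟨z0, hz0⟩).symm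
        rw [hcz]
        rcases hOr with ⟨h1, h2⟩ | ⟨h1, h2⟩
        · have hne := p.1.2.1 e
          rw [h1, h2] at hne
          exact hne
        · have hne := p.1.2.1 e
          rw [h1, h2] at hne
          exact fun hh => hne hh.symm
      · apply Subtype.ext
        funext v'
        show extFun G w k x.1 c'.1 v'.1 = c'.1 v'
        rw [extFun_ne _ _ v'.2]
      · intro p
        apply Subtype.ext
        apply Subtype.ext
        funext v
        show extFun G w k (p.1.1 w) c'.1 v = p.1.1 v
        by_cases hv : v = w
        · subst hv
          rw [extFun_w]
        · rw [extFun_ne _ _ hv]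
          exact (congrFun (congrArg Subtype.val p.2) ⟨v, hv⟩).symm
      · intro x
        apply Subtype.ext
        show extFun G w k x.1 c'.1 w = x.1
        rw [extFun_w]
    rw [Nat.card_congr hequiv, Nat.card_eq_fintype_card]
    have h1 : Fintype.card {x : Fin k // ¬x = c'.1 ⟨z0, hz0⟩} =
        Fintype.card (Fin k) - Fintype.card {x : Fin k // x = c'.1 ⟨z0, hz0⟩} :=
      Fintype.card_subtype_compl _
    simp only [Fintype.card_subtype_eq, Fintype.card_fin] at h1
    convert h1 using 2
  have h0 : G.tau k = Nat.card ((c' : {c' : G'.V → Fin k // G'.IsFlowing k c'}) ×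
      {c // R c = c'}) := Nat.card_congr (Equiv.sigmaFiberEquiv R).symm
  rw [h0, Nat.card_eq_fintype_card, Fintype.card_sigma]
  have h2 : ∀ c' : {c' : G'.V → Fin k // G'.IsFlowing k c'},
      Fintype.card {c // R c = c'} = k - 1 := by
    intro c'
    rw [← Nat.card_eq_fintype_card]
    exact hfib c'
  rw [Finset.sum_congr rfl (fun c' _ => h2 c'), Finset.sum_const, smul_eq_mul,
    Finset.card_univ]
  congr 1
  rw [DiGraph.tau, Nat.card_eq_fintype_card]

lemma tau_delLeaf_multiT (hsw : G.s e = w) {f0 : G.E} (hf0 : f0 ≠ e)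
    (ht0 : G.t f0 = G.t e) (k : ℕ) :
    G.tau k = (delLeaf G w e hA).tau k := by
  classical
  set G' := delLeaf G w e hA with hG'
  have hte : G.t e ≠ w := fun h => (hA f0 hf0).2 (ht0.trans h)
  apply Nat.card_congr
  have hflow : ∀ c' : {c' : G'.V → Fin k // G'.IsFlowing k c'},
      G.IsFlowing k (extFun G w k (c'.1 ⟨G.s f0, (hA f0 hf0).1⟩) c'.1) := by
    intro c'
    refine ⟨?_, ?_, ?_⟩
    · intro f
      by_cases hfe : f = e
      · subst hfe
        rw [hsw, extFun_w, extFun_ne _ _ hte]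
        have heq : (⟨G.t f, hte⟩ : G'.V) = G'.t ⟨f0, hf0⟩ := Subtype.ext ht0.symm
        rw [heq]
        exact c'.2.1 ⟨f0, hf0⟩
      · rw [extFun_ne _ _ (hA f hfe).1, extFun_ne _ _ (hA f hfe).2]
        exact c'.2.1 ⟨f, hfe⟩
    · intro f g htfg
      by_cases hfe : f = e <;> by_cases hge : g = e
      · subst hfe; subst hge; rfl
      · subst hfe
        rw [hsw, extFun_w, extFun_ne _ _ (hA g hge).1]
        exact c'.2.2.1 ⟨f0, hf0⟩ ⟨g, hge⟩ (Subtype.ext (ht0.trans htfg))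
      · subst hge
        rw [hsw, extFun_w, extFun_ne _ _ (hA f hfe).1]
        exact c'.2.2.1 ⟨f, hfe⟩ ⟨f0, hf0⟩ (Subtype.ext (htfg.trans ht0.symm))
      · rw [extFun_ne _ _ (hA f hfe).1, extFun_ne _ _ (hA g hge).1]
        exact c'.2.2.1 ⟨f, hfe⟩ ⟨g, hge⟩ (Subtype.ext htfg)
    · intro f g hsfg
      by_cases hfe : f = e <;> by_cases hge : g = e
      · subst hfe; subst hge; rfl
      · subst hfe
        exact absurd (hsfg.symm.trans hsw) (hA g hge).1
      · subst hge
        exact absurd (hsfg.trans hsw) (hA f hfe).1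
      · rw [extFun_ne _ _ (hA f hfe).2, extFun_ne _ _ (hA g hge).2]
        exact c'.2.2.2 ⟨f, hfe⟩ ⟨g, hge⟩ (Subtype.ext hsfg)
  refine ⟨fun c => ⟨fun v' => c.1 v'.1, flowing_restrict hA c.1 c.2⟩,
    fun c' => ⟨extFun G w k (c'.1 ⟨G.s f0, (hA f0 hf0).1⟩) c'.1, hflow c'⟩, ?_, ?_⟩
  · intro c
    apply Subtype.ext
    funext v
    show extFun G w k (c.1 (G.s f0)) (fun v' => c.1 v'.1) v = c.1 v
    by_cases hv : v = w
    · subst hv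
      rw [extFun_w]
      exact (c.2.2.1 f0 e ht0).trans (congrArg c.1 hsw)
    · rw [extFun_ne _ _ hv]
  · intro c'
    apply Subtype.ext
    funext v'
    show extFun G w k (c'.1 ⟨G.s f0, (hA f0 hf0).1⟩) c'.1 v'.1 = c'.1 v'
    rw [extFun_ne _ _ v'.2]

lemma tau_delLeaf_multiS (htw : G.t e = w) {f0 : G.E} (hf0 : f0 ≠ e)
    (hs0 : G.s f0 = G.s e) (k : ℕ) :
    G.tau k = (delLeaf G w e hA).tau k := by
  classical
  set G' := delLeaf G w e hA with hG'
  have hse : G.s e ≠ w := fun h => (hA f0 hf0).1 (hs0.trans h)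
  apply Nat.card_congr
  have hflow : ∀ c' : {c' : G'.V → Fin k // G'.IsFlowing k c'},
      G.IsFlowing k (extFun G w k (c'.1 ⟨G.t f0, (hA f0 hf0).2⟩) c'.1) := by
    intro c'
    refine ⟨?_, ?_, ?_⟩
    · intro f
      by_cases hfe : f = e
      · subst hfe
        rw [htw, extFun_w, extFun_ne _ _ hse]
        have heq : (⟨G.s f, hse⟩ : G'.V) = G'.s ⟨f0, hf0⟩ := Subtype.ext hs0.symm
        rw [heq]
        exact c'.2.1 ⟨f0, hf0⟩
      · rw [extFun_ne _ _ (hA f hfe).1, extFun_ne _ _ (hA f hfe).2]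
        exact c'.2.1 ⟨f, hfe⟩
    · intro f g htfg
      by_cases hfe : f = e <;> by_cases hge : g = e
      · subst hfe; subst hge; rfl
      · subst hfe
        exact absurd (htfg.symm.trans htw) (hA g hge).2
      · subst hge
        exact absurd (htfg.trans htw) (hA f hfe).2
      · rw [extFun_ne _ _ (hA f hfe).1, extFun_ne _ _ (hA g hge).1]
        exact c'.2.2.1 ⟨f, hfe⟩ ⟨g, hge⟩ (Subtype.ext htfg)
    · intro f g hsfg
      by_cases hfe : f = e <;> by_cases hge : g = e
      · subst hfe; subst hge; rfl
      · subst hfe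
        rw [htw, extFun_w, extFun_ne _ _ (hA g hge).2]
        exact c'.2.2.2 ⟨f0, hf0⟩ ⟨g, hge⟩ (Subtype.ext (hs0.trans hsfg))
      · subst hge
        rw [htw, extFun_w, extFun_ne _ _ (hA f hfe).2]
        exact c'.2.2.2 ⟨f, hfe⟩ ⟨f0, hf0⟩ (Subtype.ext (hsfg.trans hs0.symm))
      · rw [extFun_ne _ _ (hA f hfe).2, extFun_ne _ _ (hA g hge).2]
        exact c'.2.2.2 ⟨f, hfe⟩ ⟨g, hge⟩ (Subtype.ext hsfg)
  refine ⟨fun c => ⟨fun v' => c.1 v'.1, flowing_restrict hA c.1 c.2⟩,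
    fun c' => ⟨extFun G w k (c'.1 ⟨G.t f0, (hA f0 hf0).2⟩) c'.1, hflow c'⟩, ?_, ?_⟩
  · intro c
    apply Subtype.ext
    funext v
    show extFun G w k (c.1 (G.t f0)) (fun v' => c.1 v'.1) v = c.1 v
    by_cases hv : v = w
    · subst hv
      rw [extFun_w]
      exact (c.2.2.2 f0 e hs0).trans (congrArg c.1 htw)
    · rw [extFun_ne _ _ hv]
  · intro c'
    apply Subtype.ext
    funext v'
    show extFun G w k (c'.1 ⟨G.t f0, (hA f0 hf0).2⟩) c'.1 v'.1 = c'.1 v'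
    rw [extFun_ne _ _ v'.2]

lemma card_delLeaf_E : Fintype.card (delLeaf G w e hA).E = Fintype.card G.E - 1 := by
  have h : Fintype.card {f : G.E // ¬f = e} =
      Fintype.card G.E - Fintype.card {f : G.E // f = e} :=
    Fintype.card_subtype_compl _
  simp only [Fintype.card_subtype_eq] at h
  convert h using 2

lemma tau_of_isEmpty {G : DiGraph} (hE : IsEmpty G.E) (hT : G.ConnectedD) (k : ℕ) :
    G.tau k = k ∧ nc G univ = 0 := by
  have hsub : ∀ v v' : G.V, v = v' := by
    intro v v'
    have h := hT.2 v v'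
    induction h with
    | rel x y hxy => exact hE.elim (Classical.choice ⟨hxy.choose⟩)
    | refl => rfl
    | symm _ _ _ ih => exact ih.symm
    | trans _ _ _ _ _ ih1 ih2 => exact ih1.trans ih2
  constructor
  · have hall : ∀ c : G.V → Fin k, G.IsFlowing k c := fun c =>
      ⟨fun f => hE.elim f, fun f => hE.elim f, fun f => hE.elim f⟩
    have h1 : G.tau k = Nat.card (G.V → Fin k) :=
      Nat.card_congr (Equiv.subtypeUnivEquiv hall)
    obtain ⟨v⟩ := hT.1
    have hV1 : Fintype.card G.V = 1 :=
      Fintype.card_eq_one_iff.mpr ⟨v, fun y => hsub y v⟩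
    rw [h1, Nat.card_eq_fintype_card, Fintype.card_fun, hV1, pow_one,
      Fintype.card_fin]
  · have huniv : (univ : Finset G.E) = ∅ := Finset.univ_eq_empty
    rw [nc, huniv, Finset.image_empty, Finset.card_empty]

lemma tau_formula : ∀ (N : ℕ) (G : DiGraph), Fintype.card G.E ≤ N →
    G.EdgeUnique → ¬G.HasPatternB → G.IsTreeD →
    ∀ k : ℕ, G.tau k = k * (k - 1) ^ nc G univ := by
  intro N
  induction N with
  | zero =>
    intro G hcard hU hB hT k
    have hE : IsEmpty G.E := Fintype.card_eq_zero_iff.mp (Nat.le_zero.mp hcard)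
    obtain ⟨h1, h2⟩ := tau_of_isEmpty hE hT.1 k
    rw [h1, h2, pow_zero, mul_one]
  | succ N ih =>
    intro G hcard hU hB hT k
    by_cases hE : IsEmpty G.E
    · obtain ⟨h1, h2⟩ := tau_of_isEmpty hE hT.1 k
      rw [h1, h2, pow_zero, mul_one]
    · obtain ⟨e0⟩ := not_isEmpty_iff.mp hE
      have hl : G.Loopless := loopless_of_forest hT.2
      obtain ⟨w, hw⟩ := exists_leaf hl hT.2 e0
      obtain ⟨e, hOr0, hA⟩ := leaf_spec hw
      have hz0 : (if G.s e = w then G.t e else G.s e) ≠ w := by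
        rcases hOr0 with ⟨h1, h2⟩ | ⟨h1, h2⟩
        · rw [if_pos h1]; exact h2
        · rw [if_neg h2]; exact h2
      have hOr : (G.s e = w ∧ G.t e = (if G.s e = w then G.t e else G.s e)) ∨
          (G.t e = w ∧ G.s e = (if G.s e = w then G.t e else G.s e)) := by
        rcases hOr0 with ⟨h1, h2⟩ | ⟨h1, h2⟩
        · exact Or.inl ⟨h1, (if_pos h1).symm⟩
        · exact Or.inr ⟨h1, (if_neg h2).symm⟩
      have hU' := delLeaf_edgeUnique hA hU
      have hB' := delLeaf_patternB hA hB
      have hT' : (delLeaf G w e hA).IsTreeD :=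
        ⟨delLeaf_connected hA hT.1 hz0 hOr, delLeaf_forest hA hT.2⟩
      have hpos : 1 ≤ Fintype.card G.E := Fintype.card_pos_iff.mpr ⟨e0⟩
      have hcard' : Fintype.card (delLeaf G w e hA).E ≤ N := by
        rw [card_delLeaf_E]
        omega
      have ihG := ih (delLeaf G w e hA) hcard' hU' hB' hT' k
      by_cases hsing : ∀ f : G.E, f ≠ e → ¬erel G e f
      · rw [tau_delLeaf_single hA hz0 hOr hsing k, ihG,
          nc_delLeaf_single hA hU hB hT.2 hsing, pow_succ]
        ring
      · push_neg at hsing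
        obtain ⟨f0, hf0, hrel⟩ := hsing
        rcases hrel with rfl | hrel | hrel
        · exact absurd rfl hf0
        · have hsw : G.s e = w := by
            rcases hOr0 with ⟨h1, -⟩ | ⟨h1, -⟩
            · exact h1
            · exact absurd (hrel.symm.trans h1) (hA f0 hf0).2
          rw [tau_delLeaf_multiT hA hsw hf0 hrel.symm k, ihG,
            nc_delLeaf_multi hA hU hB hT.2 hf0 (Or.inr (Or.inl hrel))]
        · have htw : G.t e = w := by
            rcases hOr0 with ⟨h1, -⟩ | ⟨h1, -⟩
            · exact absurd (hrel.symm.trans h1) (hA f0 hf0).1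
            · exact h1
          rw [tau_delLeaf_multiS hA htw hf0 hrel.symm k, ihG,
            nc_delLeaf_multi hA hU hB hT.2 hf0 (Or.inr (Or.inr hrel))]

end MPAux
/-- For an MP-tree `G` and every integer `k ≥ 0`,
`k · T_{M_G}(1-k, 0) = (-1)^{r(G)} · τ_G(k)`. -/
theorem tutte_flowing_colourings_tree (G : DiGraph) (hU : G.EdgeUnique)
    (hMP : G.IsMPDigraph) (htree : G.IsTreeD) (k : ℕ) :
    (k : ℤ) * G.tutte (1 - (k : ℤ)) 0 =
      (-1 : ℤ) ^ (G.mrank Finset.univ) * (G.tau k : ℤ) := by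
  have hB : ¬G.HasPatternB := hMP.1.2.2.1
  have hF : G.IsForestD := htree.2
  rw [MPAux.tutte_eq hU hB hF, MPAux.mrank_eq_nc hU hB hF,
    MPAux.tau_formula (Fintype.card G.E) G le_rfl hU hB htree k]
  rcases k with _ | k
  · simp
  · have h1 : k + 1 - 1 = k := by omega
    rw [h1]
    push_cast
    have h2 : (1 - ((k : ℤ) + 1)) = -(k : ℤ) := by ring
    rw [h2, neg_pow]
    ring
end
end

section
/- Let G be an MP-forest. Then the following identity of polynomials in the variable α holds: Σ_{m ∈ Mult(G)} (-1)^{|E(m)|} α^{p_0(m)} = (-1)^{r(G)} · α^{|E(G)| - r(G) + p_0(G)} · T_{M_G}(1-α, 1), where p_0(H) denotes the number of connected components of a digraph H and r(G) is the rank of E(G) in M_G. (The left-hand side is the graded Euler characteristic χ_μ(G, α) of the multipath cochain complex of G with coefficients in a graded algebra of graded dimension α.) -/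
set_option autoImplicit false

noncomputable section

attribute [local instance] Classical.propDecidable

section AuxProof
open DiGraph Relation

private lemma eqvGen_eq_of_not {V : Type} (r : V → V → Prop) (h : ∀ u v, ¬ r u v)
    {u v : V} (huv : Relation.EqvGen r u v) : u = v := by
  induction huv with
  | rel x y hxy => exact absurd hxy (h x y)
  | refl x => rfl
  | symm x y _ ih => exact ih.symm
  | trans x y z _ _ ih1 ih2 => exact ih1.trans ih2

private lemma card_quot_of_not {V : Type} [Fintype V] (r : V → V → Prop)
    (h : ∀ u v, ¬ r u v) :
    Nat.card (Quotient (Relation.EqvGen.setoid r)) = Fintype.card V := by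
  rw [← Nat.card_eq_fintype_card]
  exact (Nat.card_eq_of_bijective (Quotient.mk _)
    ⟨fun a b hab => eqvGen_eq_of_not r h (Quotient.exact hab),
      fun q => Quotient.exists_rep q⟩).symm

private lemma eqvGen_pair_elim {V : Type} (r : V → V → Prop) (a b : V)
    (hab : ¬ Relation.EqvGen r a b) {u v : V}
    (h : Relation.EqvGen (fun x y => r x y ∨ (x = a ∧ y = b) ∨ (x = b ∧ y = a)) u v) :
    Relation.EqvGen r u v ∨ (Relation.EqvGen r u a ∧ Relation.EqvGen r b v) ∨
      (Relation.EqvGen r u b ∧ Relation.EqvGen r a v) := by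
  induction h with
  | rel x y hxy =>
    rcases hxy with h' | ⟨rfl, rfl⟩ | ⟨rfl, rfl⟩
    · exact Or.inl (Relation.EqvGen.rel _ _ h')
    · exact Or.inr (Or.inl ⟨Relation.EqvGen.refl _, Relation.EqvGen.refl _⟩)
    · exact Or.inr (Or.inr ⟨Relation.EqvGen.refl _, Relation.EqvGen.refl _⟩)
  | refl x => exact Or.inl (Relation.EqvGen.refl _)
  | symm x y _ ih =>
    rcases ih with h' | ⟨h1, h2⟩ | ⟨h1, h2⟩
    · exact Or.inl (Relation.EqvGen.symm _ _ h')
    · exact Or.inr (Or.inr ⟨Relation.EqvGen.symm _ _ h2, Relation.EqvGen.symm _ _ h1⟩)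
    · exact Or.inr (Or.inl ⟨Relation.EqvGen.symm _ _ h2, Relation.EqvGen.symm _ _ h1⟩)
  | trans x y z _ _ ih1 ih2 =>
    rcases ih1 with h' | ⟨h1, h2⟩ | ⟨h1, h2⟩ <;>
      rcases ih2 with h'' | ⟨h3, h4⟩ | ⟨h3, h4⟩
    · exact Or.inl (Relation.EqvGen.trans _ _ _ h' h'')
    · exact Or.inr (Or.inl ⟨Relation.EqvGen.trans _ _ _ h' h3, h4⟩)
    · exact Or.inr (Or.inr ⟨Relation.EqvGen.trans _ _ _ h' h3, h4⟩)
    · exact Or.inr (Or.inl ⟨h1, Relation.EqvGen.trans _ _ _ h2 h''⟩)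
    · exact absurd (Relation.EqvGen.symm _ _ (Relation.EqvGen.trans _ _ _ h2 h3)) hab
    · exact Or.inl (Relation.EqvGen.trans _ _ _ h1 h4)
    · exact Or.inr (Or.inr ⟨h1, Relation.EqvGen.trans _ _ _ h2 h''⟩)
    · exact Or.inl (Relation.EqvGen.trans _ _ _ h1 h4)
    · exact absurd (Relation.EqvGen.trans _ _ _ h2 h3) hab

private lemma merge_count {V : Type} [Fintype V] (r : V → V → Prop) (a b : V)
    (hab : ¬ Relation.EqvGen r a b) :
    Nat.card (Quotient (Relation.EqvGen.setoid
        (fun x y => r x y ∨ (x = a ∧ y = b) ∨ (x = b ∧ y = a)))) + 1 =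
      Nat.card (Quotient (Relation.EqvGen.setoid r)) := by
  classical
  set r₂ : V → V → Prop := fun x y => r x y ∨ (x = a ∧ y = b) ∨ (x = b ∧ y = a) with hr2
  have hmono : ∀ u v : V, Relation.EqvGen r u v → Relation.EqvGen r₂ u v :=
    fun u v h => Relation.EqvGen.mono (fun x y hxy => Or.inl hxy) u v h
  set q : Quotient (Relation.EqvGen.setoid r) → Quotient (Relation.EqvGen.setoid r₂) :=
    Quotient.map id (fun u v h => hmono u v h) with hq
  set g : Quotient (Relation.EqvGen.setoid r) →
      (Quotient (Relation.EqvGen.setoid r₂)) ⊕ Unit :=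
    fun x => if x = Quotient.mk (Relation.EqvGen.setoid r) b then Sum.inr ()
      else Sum.inl (q x) with hg
  have hqmk : ∀ u : V, q (Quotient.mk _ u) = Quotient.mk (Relation.EqvGen.setoid r₂) u := by
    intro u; rw [hq, Quotient.map_mk]; rfl
  have hbij : Function.Bijective g := by
    constructor
    · intro x y hxy
      obtain ⟨u, rfl⟩ := Quotient.exists_rep x
      obtain ⟨v, rfl⟩ := Quotient.exists_rep y
      by_cases hx : Quotient.mk (Relation.EqvGen.setoid r) u =
          Quotient.mk (Relation.EqvGen.setoid r) b <;>
        by_cases hy : Quotient.mk (Relation.EqvGen.setoid r) v =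
          Quotient.mk (Relation.EqvGen.setoid r) b
      · rw [hx, hy]
      · rw [hg] at hxy; simp only [if_pos hx, if_neg hy] at hxy; exact absurd hxy (by simp)
      · rw [hg] at hxy; simp only [if_neg hx, if_pos hy] at hxy; exact absurd hxy (by simp)
      · rw [hg] at hxy; simp only [if_neg hx, if_neg hy, Sum.inl.injEq] at hxy
        rw [hqmk, hqmk] at hxy
        have h2 : Relation.EqvGen r₂ u v := Quotient.exact hxy
        rcases eqvGen_pair_elim r a b hab h2 with h' | ⟨h1', h2'⟩ | ⟨h1', h2'⟩
        · exact Quotient.sound h'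
        · exact absurd (Quotient.sound (Relation.EqvGen.symm _ _ h2')) hy
        · exact absurd (Quotient.sound h1') hx
    · intro z
      rcases z with w | u
      · obtain ⟨u, rfl⟩ := Quotient.exists_rep w
        by_cases hu : Quotient.mk (Relation.EqvGen.setoid r) u =
            Quotient.mk (Relation.EqvGen.setoid r) b
        · refine ⟨Quotient.mk _ a, ?_⟩
          have hane : Quotient.mk (Relation.EqvGen.setoid r) a ≠
              Quotient.mk (Relation.EqvGen.setoid r) b := fun h => hab (Quotient.exact h)
          rw [hg]; simp only [if_neg hane, hqmk]
          have h1 : Relation.EqvGen r u b := Quotient.exact hu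
          have h2 : Relation.EqvGen r₂ a u :=
            Relation.EqvGen.trans _ _ _
              (Relation.EqvGen.rel a b (Or.inr (Or.inl ⟨rfl, rfl⟩)))
              (Relation.EqvGen.symm _ _ (hmono u b h1))
          exact congrArg Sum.inl (Quotient.sound h2)
        · refine ⟨Quotient.mk _ u, ?_⟩
          rw [hg]; simp only [if_neg hu, hqmk]
      · rcases u with ⟨⟩
        exact ⟨Quotient.mk _ b, by rw [hg]; simp⟩
  have hcard := Nat.card_eq_of_bijective g hbij
  rw [Nat.card_sum] at hcard
  simp only [Nat.card_unique] at hcard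
  omega

private lemma exists_path_list {V : Type} (r : V → V → Prop) {u v : V}
    (h : Relation.ReflTransGen r u v) :
    ∃ p : List V, p.Chain' r ∧ p.Nodup ∧ p.head? = some u ∧ p.getLast? = some v := by
  induction h using Relation.ReflTransGen.head_induction_on with
  | refl => exact ⟨[v], List.isChain_singleton v, by simp, by simp, by simp⟩
  | @head x c h' _ ih =>
    obtain ⟨p, hc, hnd, hh, hl⟩ := ih
    have hpne : p ≠ [] := by rintro rfl; simp at hh
    by_cases hm : x ∈ p
    · obtain ⟨p₁, p₂, rfl⟩ := List.append_of_mem hm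
      refine ⟨x :: p₂, hc.suffix ⟨p₁, rfl⟩, hnd.sublist (List.IsSuffix.sublist ⟨p₁, rfl⟩),
        rfl, ?_⟩
      rw [List.getLast?_append] at hl
      rw [List.getLast?_eq_getLast (by simp : x :: p₂ ≠ [])] at hl ⊢
      simpa using hl
    · refine ⟨x :: p, List.isChain_cons.mpr ⟨fun y hy => ?_, hc⟩, by simp [hnd, hm], rfl, ?_⟩
      · rw [hh] at hy
        simp only [Option.mem_def, Option.some.injEq] at hy
        subst hy; exact h'
      · rw [show x :: p = [x] ++ p from rfl, List.getLast?_append, hl]; rfl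

private lemma adjIn_symm_rel (G : DiGraph) (R : Finset G.E) :
    ∀ u v, adjIn G R u v → adjIn G R v u := by
  rintro u v ⟨g, hg, h | h⟩
  · exact ⟨g, hg, Or.inr h⟩
  · exact ⟨g, hg, Or.inl h⟩

private lemma eqvGen_iff_rtg {V : Type} (r : V → V → Prop) (hs : ∀ u v, r u v → r v u)
    {u v : V} : Relation.EqvGen r u v ↔ Relation.ReflTransGen r u v := by
  constructor
  · intro h
    induction h with
    | rel x y hxy => exact Relation.ReflTransGen.single hxy
    | refl x => exact Relation.ReflTransGen.refl
    | symm x y _ ih => haveI : Std.Symm r := ⟨fun a b hab => hs a b hab⟩; exact Std.Symm.symm _ _ ih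
    | trans x y z _ _ ih1 ih2 => exact ih1.trans ih2
  · intro h
    induction h with
    | refl => exact Relation.EqvGen.refl _
    | tail _ hxy ih => exact Relation.EqvGen.trans _ _ _ ih (Relation.EqvGen.rel _ _ hxy)

private lemma no_path_of_forest (G : DiGraph) (hf : G.IsForestD) (m : Finset G.E)
    (e : G.E) (_he : e ∈ m) :
    ¬ Relation.ReflTransGen (adjIn G (m.erase e)) (G.s e) (G.t e) := by
  intro h
  obtain ⟨p, hc, hnd, hh, hl⟩ := exists_path_list _ h
  have hpne : p ≠ [] := by rintro rfl; simp at hh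
  have hL0 : 0 < p.length := List.length_pos_iff.mpr hpne
  have hedge : ∀ (i : ℕ) (h : i < p.length - 1),
      adjIn G (m.erase e) (p.get ⟨i, by omega⟩) (p.get ⟨i + 1, by omega⟩) :=
    fun i h => List.isChain_iff_getElem.mp hc i (by omega)
  have hinjv : Function.Injective p.get := List.nodup_iff_injective_get.mp hnd
  have hkey : ∀ (x y : ℕ) (hx : x < p.length) (hy : y < p.length),
      p.get ⟨x, hx⟩ = p.get ⟨y, hy⟩ → x = y :=
    fun x y hx hy hxy => Fin.mk_eq_mk.mp (hinjv hxy)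
  have hhead : p.get ⟨0, hL0⟩ = G.s e := by
    rw [List.head?_eq_head hpne] at hh
    rw [List.get_mk_zero hL0]
    exact Option.some.inj hh
  have hlast : p.get ⟨p.length - 1, by omega⟩ = G.t e := by
    rw [List.getLast?_eq_getLast hpne] at hl
    rw [List.getLast_eq_getElem] at hl
    exact Option.some.inj hl
  apply hf
  set ed : Fin p.length → G.E :=
    fun i => if hi : i.val < p.length - 1 then (hedge i.val hi).choose else e with hed
  refine ⟨p.length, ed, p.get, hL0, ?_, hinjv, ?_⟩
  · intro i j hij
    by_cases hi : i.val < p.length - 1 <;> by_cases hj : j.val < p.length - 1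
    · rw [hed] at hij; simp only [dif_pos hi, dif_pos hj] at hij
      obtain ⟨_, hsi⟩ := (hedge i.val hi).choose_spec
      obtain ⟨_, hsj⟩ := (hedge j.val hj).choose_spec
      rw [hij] at hsi
      have : i.val = j.val := by
        rcases hsi with ⟨hs1, ht1⟩ | ⟨hs1, ht1⟩ <;> rcases hsj with ⟨hs2, ht2⟩ | ⟨hs2, ht2⟩
        · exact hkey _ _ _ _ (hs1.symm.trans hs2)
        · have h1 := hkey _ _ _ _ (hs1.symm.trans hs2)
          have h2 := hkey _ _ _ _ (ht1.symm.trans ht2)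
          omega
        · have h1 := hkey _ _ _ _ (hs1.symm.trans hs2)
          have h2 := hkey _ _ _ _ (ht1.symm.trans ht2)
          omega
        · have := hkey _ _ _ _ (ht1.symm.trans ht2); exact this
      exact Fin.ext this
    · exfalso
      obtain ⟨hmi, _⟩ := (hedge i.val hi).choose_spec
      rw [hed] at hij; simp only [dif_pos hi, dif_neg hj] at hij
      exact (Finset.mem_erase.mp hmi).1 hij
    · exfalso
      obtain ⟨hmj, _⟩ := (hedge j.val hj).choose_spec
      rw [hed] at hij; simp only [dif_neg hi, dif_pos hj] at hij
      exact (Finset.mem_erase.mp hmj).1 hij.symm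
    · have hi' : i.val = p.length - 1 := by have := i.isLt; omega
      have hj' : j.val = p.length - 1 := by have := j.isLt; omega
      exact Fin.ext (hi'.trans hj'.symm)
  · intro i
    by_cases hi : i.val < p.length - 1
    · have hlt : i.val + 1 < p.length := by omega
      have hmod : (i.val + 1) % p.length = i.val + 1 := Nat.mod_eq_of_lt hlt
      obtain ⟨_, hsp⟩ := (hedge i.val hi).choose_spec
      have hedi : ed i = (hedge i.val hi).choose := by rw [hed]; simp only [dif_pos hi]
      have hidx : (⟨(i.val + 1) % p.length, Nat.mod_lt _ i.pos⟩ : Fin p.length) =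
          ⟨i.val + 1, hlt⟩ := Fin.ext hmod
      have hieta : (⟨i.val, by omega⟩ : Fin p.length) = i := Fin.ext rfl
      rw [hedi, hidx]
      rcases hsp with ⟨h1, h2⟩ | ⟨h1, h2⟩
      · exact Or.inl ⟨h1, h2⟩
      · exact Or.inr ⟨h2, h1⟩
    · have hi' : i.val = p.length - 1 := by have := i.isLt; omega
      have hmod : (i.val + 1) % p.length = 0 := by
        have : i.val + 1 = p.length := by omega
        rw [this, Nat.mod_self]
      have hedi : ed i = e := by rw [hed]; simp only [dif_neg hi]
      have hidx : (⟨(i.val + 1) % p.length, Nat.mod_lt _ i.pos⟩ : Fin p.length) =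
          ⟨0, hL0⟩ := Fin.ext hmod
      have hieq : i = (⟨p.length - 1, by omega⟩ : Fin p.length) := Fin.ext hi'
      rw [hedi, hidx, hieq]
      exact Or.inr ⟨hlast.symm, hhead.symm⟩

private lemma adjIn_insert_iff (G : DiGraph) (e : G.E) (m : Finset G.E) :
    adjIn G (insert e m) =
      fun u v => adjIn G m u v ∨ (u = G.s e ∧ v = G.t e) ∨ (u = G.t e ∧ v = G.s e) := by
  funext u v
  apply propext
  constructor
  · rintro ⟨g, hg, hor⟩
    rcases Finset.mem_insert.mp hg with rfl | hg'
    · rcases hor with ⟨h1, h2⟩ | ⟨h1, h2⟩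
      · exact Or.inr (Or.inl ⟨h1.symm, h2.symm⟩)
      · exact Or.inr (Or.inr ⟨h2.symm, h1.symm⟩)
    · exact Or.inl ⟨g, hg', hor⟩
  · rintro (⟨g, hg, hor⟩ | ⟨rfl, rfl⟩ | ⟨rfl, rfl⟩)
    · exact ⟨g, Finset.mem_insert_of_mem hg, hor⟩
    · exact ⟨e, Finset.mem_insert_self _ _, Or.inl ⟨rfl, rfl⟩⟩
    · exact ⟨e, Finset.mem_insert_self _ _, Or.inr ⟨rfl, rfl⟩⟩

private lemma count_components (G : DiGraph) (hf : G.IsForestD) (m : Finset G.E) :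
    Nat.card (Quotient (Relation.EqvGen.setoid (adjIn G m))) + m.card =
      Fintype.card G.V := by
  induction m using Finset.induction_on with
  | empty =>
    rw [Finset.card_empty, add_zero]
    exact card_quot_of_not _ (by rintro u v ⟨g, hg, _⟩; exact absurd hg (by simp))
  | @insert e m' he ih =>
    have hnp := no_path_of_forest G hf (insert e m') e (Finset.mem_insert_self _ _)
    rw [Finset.erase_insert he] at hnp
    have hab : ¬ Relation.EqvGen (adjIn G m') (G.s e) (G.t e) :=
      fun h => hnp ((eqvGen_iff_rtg _ (adjIn_symm_rel G m')).mp h)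
    have hmc := merge_count (adjIn G m') (G.s e) (G.t e) hab
    rw [← adjIn_insert_iff G e m'] at hmc
    rw [Finset.card_insert_of_notMem he]
    omega

private lemma numComponents_subgraphOn (G : DiGraph) (m : Finset G.E) :
    numComponents (subgraphOn G m) =
      Nat.card (Quotient (Relation.EqvGen.setoid (adjIn G m))) := by
  have hadj : adj (subgraphOn G m) = adjIn G m := by
    funext u v
    apply propext
    constructor
    · rintro ⟨⟨g, hg⟩, hor⟩
      exact ⟨g, hg, hor⟩
    · rintro ⟨g, hg, hor⟩
      exact ⟨⟨g, hg⟩, hor⟩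
  unfold numComponents
  rw [hadj]
  rfl

private lemma numComponents_eq (G : DiGraph) :
    numComponents G =
      Nat.card (Quotient (Relation.EqvGen.setoid (adjIn G Finset.univ))) := by
  have hadj : adj G = adjIn G Finset.univ := by
    funext u v
    apply propext
    constructor
    · rintro ⟨g, hor⟩
      exact ⟨g, Finset.mem_univ g, hor⟩
    · rintro ⟨g, _, hor⟩
      exact ⟨g, hor⟩
  unfold numComponents
  rw [hadj]

private lemma multipath_empty (G : DiGraph) : IsMultipath G ∅ := by
  refine ⟨by simp, by simp, by simp, ?_⟩
  rintro ⟨c, ⟨hne, _, _, _⟩, hmem⟩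
  rcases c with _ | ⟨g, c'⟩
  · exact hne rfl
  · exact absurd (hmem g (by simp)) (by simp)

private lemma multipath_subset (G : DiGraph) {A B : Finset G.E}
    (h : IsMultipath G A) (hBA : B ⊆ A) : IsMultipath G B := by
  obtain ⟨h1, h2, h3, h4⟩ := h
  refine ⟨fun e he => h1 e (hBA he),
    fun e he f hf => h2 e (hBA he) f (hBA hf),
    fun e he f hf => h3 e (hBA he) f (hBA hf), ?_⟩
  rintro ⟨c, hc, hmem⟩
  exact h4 ⟨c, hc, fun g hg => hBA (hmem g hg)⟩

private lemma mrank_le_card (G : DiGraph) (A : Finset G.E) : mrank G A ≤ A.card := by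
  refine Finset.sup_le fun m hm => ?_
  exact Finset.card_le_card (Finset.mem_powerset.mp (Finset.mem_filter.mp hm).1)

private lemma mrank_of_multipath (G : DiGraph) {A : Finset G.E} (h : IsMultipath G A) :
    mrank G A = A.card := by
  refine le_antisymm (mrank_le_card G A) ?_
  exact Finset.le_sup (Finset.mem_filter.mpr ⟨Finset.mem_powerset.mpr Finset.Subset.rfl, h⟩)

private lemma multipath_of_mrank_eq (G : DiGraph) {A : Finset G.E}
    (h : mrank G A = A.card) : IsMultipath G A := by
  have hne : (A.powerset.filter (fun m => IsMultipath G m)).Nonempty :=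
    ⟨∅, Finset.mem_filter.mpr ⟨Finset.mem_powerset.mpr (Finset.empty_subset _),
      multipath_empty G⟩⟩
  obtain ⟨m, hm, hsup⟩ := Finset.exists_mem_eq_sup _ hne Finset.card
  obtain ⟨hmA, hmp⟩ := Finset.mem_filter.mp hm
  have hmA' := Finset.mem_powerset.mp hmA
  have : m = A := Finset.eq_of_subset_of_card_le hmA' (by rw [← h, mrank]; omega)
  rwa [← this]

private lemma card_le_mrank_univ (G : DiGraph) {A : Finset G.E} (h : IsMultipath G A) :
    A.card ≤ mrank G Finset.univ :=
  Finset.le_sup (Finset.mem_filter.mpr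
    ⟨Finset.mem_powerset.mpr (Finset.subset_univ A), h⟩)

end AuxProof

open DiGraph in
/-- For an MP-forest `G` and every `α`,
`χ_μ(G,α) = Σ_{m ∈ Mult(G)} (-1)^{|E(m)|} α^{p₀(m)}
  = (-1)^{r(G)} · α^{|E(G)| - r(G) + p₀(G)} · T_{M_G}(1-α, 1)`. -/
theorem euler_characteristic_tutte (G : DiGraph) (hU : G.EdgeUnique)
    (hMP : G.IsMPDigraph) (hforest : G.IsForestD) (α : ℤ) :
    (∑ m : Finset G.E,
        if G.IsMultipath m then
          (-1 : ℤ) ^ m.card * α ^ (numComponents (subgraphOn G m))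
        else 0) =
      (-1 : ℤ) ^ (G.mrank Finset.univ) *
        α ^ (Fintype.card G.E - G.mrank Finset.univ + numComponents G) *
        G.tutte (1 - α) 1 := by
  classical
  have hrE : G.mrank Finset.univ ≤ Fintype.card G.E := by
    have := mrank_le_card G Finset.univ
    rwa [Finset.card_univ] at this
  have hp : numComponents G + Fintype.card G.E = Fintype.card G.V := by
    rw [numComponents_eq G]
    have := count_components G hforest Finset.univ
    rwa [Finset.card_univ] at this
  have hLHS : (∑ m : Finset G.E, if G.IsMultipath m then
      (-1 : ℤ) ^ m.card * α ^ (numComponents (subgraphOn G m)) else 0) =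
      ∑ m : Finset G.E, if G.IsMultipath m then
      (-1 : ℤ) ^ m.card * α ^ (Fintype.card G.V - m.card) else 0 := by
    refine Finset.sum_congr rfl fun m _ => ?_
    by_cases h : G.IsMultipath m
    · rw [if_pos h, if_pos h]
      have hnc : numComponents (subgraphOn G m) = Fintype.card G.V - m.card := by
        rw [numComponents_subgraphOn G m]
        have h1 := count_components G hforest m
        omega
      rw [hnc]
    · rw [if_neg h, if_neg h]
  have htutte : G.tutte (1 - α) 1 = ∑ A : Finset G.E,
      if G.IsMultipath A then (-α) ^ (G.mrank Finset.univ - A.card) else 0 := by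
    unfold DiGraph.tutte
    refine Finset.sum_congr rfl fun A _ => ?_
    by_cases h : G.IsMultipath A
    · rw [if_pos h, mrank_of_multipath G h]
      have h1 : (1 - α - 1 : ℤ) = -α := by ring
      have h2 : (1 - 1 : ℤ) = 0 := by ring
      rw [h1, h2, Nat.sub_self, pow_zero, mul_one]
    · rw [if_neg h]
      have h1 : G.mrank A ≤ A.card := mrank_le_card G A
      have h2 : G.mrank A ≠ A.card := fun hc => h (multipath_of_mrank_eq G hc)
      have h3 : A.card - G.mrank A ≠ 0 := by omega
      have h4 : (1 - 1 : ℤ) = 0 := by ring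
      rw [h4, zero_pow h3, mul_zero]
  rw [hLHS, htutte, Finset.mul_sum]
  refine Finset.sum_congr rfl fun A _ => ?_
  by_cases h : G.IsMultipath A
  · rw [if_pos h, if_pos h]
    have hAr : A.card ≤ G.mrank Finset.univ := card_le_mrank_univ G h
    have e1 : G.mrank Finset.univ + (G.mrank Finset.univ - A.card) =
        A.card + 2 * (G.mrank Finset.univ - A.card) := by omega
    have e2 : (Fintype.card G.E - G.mrank Finset.univ + numComponents G) +
        (G.mrank Finset.univ - A.card) = Fintype.card G.V - A.card := by omega
    have key : (-1 : ℤ) ^ G.mrank Finset.univ *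
        α ^ (Fintype.card G.E - G.mrank Finset.univ + numComponents G) *
        (-α) ^ (G.mrank Finset.univ - A.card) =
        (-1 : ℤ) ^ A.card * α ^ (Fintype.card G.V - A.card) := by
      calc (-1 : ℤ) ^ G.mrank Finset.univ *
          α ^ (Fintype.card G.E - G.mrank Finset.univ + numComponents G) *
          (-α) ^ (G.mrank Finset.univ - A.card)
          = ((-1 : ℤ) ^ G.mrank Finset.univ * (-1 : ℤ) ^ (G.mrank Finset.univ - A.card)) *
            (α ^ (Fintype.card G.E - G.mrank Finset.univ + numComponents G) *
              α ^ (G.mrank Finset.univ - A.card)) := by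
            rw [neg_pow α, mul_mul_mul_comm]
        _ = (-1 : ℤ) ^ (G.mrank Finset.univ + (G.mrank Finset.univ - A.card)) *
            α ^ ((Fintype.card G.E - G.mrank Finset.univ + numComponents G) +
              (G.mrank Finset.univ - A.card)) := by rw [← pow_add, ← pow_add]
        _ = (-1 : ℤ) ^ (A.card + 2 * (G.mrank Finset.univ - A.card)) *
            α ^ (Fintype.card G.V - A.card) := by rw [e1, e2]
        _ = (-1 : ℤ) ^ A.card * α ^ (Fintype.card G.V - A.card) := by
            rw [pow_add, pow_mul, neg_one_sq, one_pow, mul_one]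
    exact key.symm
  · rw [if_neg h, if_neg h, mul_zero]
end
end
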